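/- arXiv:2009.14197 — 7 statements merged into one kernel-verified Lean document; each statement's English description precedes it below -/
import Mathlib

section
/- For positive definite matrices A, B and any real λ, A♯_λ B = (AB^{-1})^{1-λ} B, where the power of AB^{-1} is defined via its similarity to the positive definite matrix B^{-1/2}AB^{-1/2}. -/
open Matrix ComplexOrder

/-- Real power of a (Hermitian, in practice positive definite) matrix via spectral calculus. -/
noncomputable def mpow {m : Type*} [Fintype m] [DecidableEq m]
    (A : Matrix m m ℂ) (r : ℝ) : Matrix m m ℂ :=
  if h : A.IsHermitian then
    (h.eigenvectorUnitary : Matrix m m ℂ) *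
      Matrix.diagonal (fun i => ((h.eigenvalues i ^ r : ℝ) : ℂ)) *
      star (h.eigenvectorUnitary : Matrix m m ℂ)
  else A

/-- λ-weighted geometric mean `A♯_λ B = A^{1/2}(A^{-1/2} B A^{-1/2})^λ A^{1/2}`. -/
noncomputable def gmean {m : Type*} [Fintype m] [DecidableEq m]
    (A B : Matrix m m ℂ) (lam : ℝ) : Matrix m m ℂ :=
  mpow A (1/2) * mpow (mpow A (-(1/2)) * B * mpow A (-(1/2))) lam * mpow A (1/2)

section Aux

variable {m : Type*} [Fintype m] [DecidableEq m]

lemma continuousOn_of_finite (f : ℝ → ℝ) {s : Set ℝ} (hs : s.Finite) : ContinuousOn f s := by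
  have := hs.to_subtype
  have : DiscreteTopology s := Finite.instDiscreteTopology
  rw [continuousOn_iff_continuous_restrict]
  exact continuous_of_discreteTopology

lemma mpow_eq_cfc {A : Matrix m m ℂ} (hA : A.IsHermitian) (r : ℝ) :
    mpow A r = cfc (fun x : ℝ => x ^ r) A := by
  rw [Matrix.IsHermitian.cfc_eq hA, mpow, dif_pos hA]
  rfl

lemma spectrum_pos_of_posDef {A : Matrix m m ℂ} (hA : A.PosDef) :
    ∀ x ∈ spectrum ℝ A, 0 < x := by
  intro x hx
  rw [Matrix.IsHermitian.spectrum_real_eq_range_eigenvalues hA.isHermitian] at hx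
  obtain ⟨i, rfl⟩ := hx
  exact hA.eigenvalues_pos i

lemma mpow_isHermitian {A : Matrix m m ℂ} (hA : A.IsHermitian) (r : ℝ) :
    (mpow A r).IsHermitian := by
  rw [mpow_eq_cfc hA]
  exact cfc_predicate (fun x : ℝ => x ^ r) A

lemma mpow_mul_mpow {A : Matrix m m ℂ} (hA : A.PosDef) (r s : ℝ) :
    mpow A r * mpow A s = mpow A (r + s) := by
  have h := hA.isHermitian
  have hsa : IsSelfAdjoint A := h
  rw [mpow_eq_cfc h, mpow_eq_cfc h, mpow_eq_cfc h,
    ← cfc_mul _ _ A (continuousOn_of_finite _ (Matrix.finite_real_spectrum (A := A)))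
      (continuousOn_of_finite _ (Matrix.finite_real_spectrum (A := A)))]
  exact cfc_congr fun x hx => (Real.rpow_add (spectrum_pos_of_posDef hA x hx) r s).symm

lemma mpow_zero {A : Matrix m m ℂ} (hA : A.IsHermitian) : mpow A 0 = 1 := by
  have hsa : IsSelfAdjoint A := hA
  rw [mpow_eq_cfc hA]
  rw [show (fun x : ℝ => x ^ (0:ℝ)) = fun _ : ℝ => (1:ℝ) from funext fun x => Real.rpow_zero x]
  exact cfc_const_one ℝ A

lemma mpow_one {A : Matrix m m ℂ} (hA : A.IsHermitian) : mpow A 1 = A := by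
  have hsa : IsSelfAdjoint A := hA
  rw [mpow_eq_cfc hA]
  rw [show (fun x : ℝ => x ^ (1:ℝ)) = fun x : ℝ => x from funext fun x => Real.rpow_one x]
  exact cfc_id' ℝ A

lemma mpow_isUnit {A : Matrix m m ℂ} (hA : A.PosDef) (r : ℝ) : IsUnit (mpow A r) :=
  ⟨⟨mpow A r, mpow A (-r),
    by rw [mpow_mul_mpow hA, add_neg_cancel, mpow_zero hA.isHermitian],
    by rw [mpow_mul_mpow hA, neg_add_cancel, mpow_zero hA.isHermitian]⟩, rfl⟩

lemma isUnit_conjT {X : Matrix m m ℂ} (hX : IsUnit X) : IsUnit Xᴴ := by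
  obtain ⟨u, rfl⟩ := hX
  exact ⟨⟨(u : Matrix m m ℂ)ᴴ, (↑u⁻¹ : Matrix m m ℂ)ᴴ,
    by rw [← Matrix.conjTranspose_mul, u.inv_mul, Matrix.conjTranspose_one],
    by rw [← Matrix.conjTranspose_mul, u.mul_inv, Matrix.conjTranspose_one]⟩, rfl⟩

lemma posDef_conj {P X : Matrix m m ℂ} (hP : P.PosDef) (hX : IsUnit X) :
    (X * P * Xᴴ).PosDef := by
  constructor
  · simpa only [conjTranspose_conjTranspose] using
      Matrix.isHermitian_conjTranspose_mul_mul Xᴴ hP.isHermitian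
  · have hXH : IsUnit Xᴴ := isUnit_conjT hX
    have h := hP.conjTranspose_mul_mul_same (B := Xᴴ)
      (Matrix.mulVec_injective_iff_isUnit.mpr hXH)
    rw [conjTranspose_conjTranspose] at h
    exact h.2

lemma mpow_posDef {A : Matrix m m ℂ} (hA : A.PosDef) (r : ℝ) : (mpow A r).PosDef := by
  have h2 : mpow A (r/2) * mpow A (r/2) = mpow A r := by
    rw [mpow_mul_mpow hA]; ring_nf
  have hH := (mpow_isHermitian hA.isHermitian (r/2)).eq
  have h : mpow A r = mpow A (r/2) * 1 * (mpow A (r/2))ᴴ := by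
    rw [mul_one, hH, h2]
  rw [h]
  exact posDef_conj Matrix.PosDef.one (mpow_isUnit hA _)

lemma mpow_mpow {A : Matrix m m ℂ} (hA : A.PosDef) (r s : ℝ) :
    mpow (mpow A r) s = mpow A (r * s) := by
  have h := hA.isHermitian
  have hm : (mpow A r).IsHermitian := mpow_isHermitian h r
  have hsa : IsSelfAdjoint A := h
  calc mpow (mpow A r) s = cfc (fun x : ℝ => x ^ s) (cfc (fun x : ℝ => x ^ r) A) := by
        rw [mpow_eq_cfc hm, mpow_eq_cfc h]
    _ = cfc ((fun x : ℝ => x ^ s) ∘ (fun x : ℝ => x ^ r)) A :=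
        (cfc_comp (fun x : ℝ => x ^ s) (fun x : ℝ => x ^ r) A hsa
          (continuousOn_of_finite _ ((Matrix.finite_real_spectrum (A := A)).image _))
          (continuousOn_of_finite _ (Matrix.finite_real_spectrum (A := A)))).symm
    _ = cfc (fun x : ℝ => x ^ (r * s)) A := cfc_congr fun x hx => by
        simp only [Function.comp_apply]
        rw [← Real.rpow_mul (spectrum_pos_of_posDef hA x hx).le]
    _ = mpow A (r * s) := (mpow_eq_cfc h _).symm

/-- Conjugation by a unitary as a star algebra homomorphism. -/
@[simps]
noncomputable def conjSAH (U : Matrix m m ℂ) (hU : U ∈ unitary (Matrix m m ℂ)) :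
    Matrix m m ℂ →⋆ₐ[ℂ] Matrix m m ℂ where
  toFun x := U * x * star U
  map_one' := by
    show U * 1 * star U = 1
    rw [mul_one]; exact (Unitary.mem_iff.mp hU).2
  map_mul' x y := by
    have h1 : star U * U = 1 := (Unitary.mem_iff.mp hU).1
    show U * (x * y) * star U = U * x * star U * (U * y * star U)
    calc U * (x * y) * star U = U * x * (star U * U) * y * star U := by
          rw [h1]; noncomm_ring
      _ = U * x * star U * (U * y * star U) := by noncomm_ring
  map_zero' := by
    show U * 0 * star U = 0
    simp
  map_add' x y := by
    show U * (x + y) * star U = U * x * star U + U * y * star U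
    noncomm_ring
  commutes' c := by
    show U * algebraMap ℂ (Matrix m m ℂ) c * star U = algebraMap ℂ (Matrix m m ℂ) c
    have h2 : U * star U = 1 := (Unitary.mem_iff.mp hU).2
    rw [Algebra.algebraMap_eq_smul_one, mul_smul_comm, mul_one, smul_mul_assoc, h2]
  map_star' x := by
    show U * star x * star U = star (U * x * star U)
    rw [StarMul.star_mul, StarMul.star_mul, star_star, mul_assoc]


lemma star_mpow {A : Matrix m m ℂ} (hA : A.IsHermitian) (r : ℝ) :
    star (mpow A r) = mpow A r := by
  rw [Matrix.star_eq_conjTranspose]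
  exact (mpow_isHermitian hA r).eq

lemma mpow_unitary_conj {U A : Matrix m m ℂ} (hU : U ∈ unitary (Matrix m m ℂ))
    (hA : A.IsHermitian) (r : ℝ) :
    mpow (U * A * star U) r = U * mpow A r * star U := by
  have hsa : IsSelfAdjoint A := hA
  have hconj : IsSelfAdjoint (U * A * star U) := hsa.conjugate U
  have hconj' : (U * A * star U).IsHermitian := hconj
  have hcont : Continuous (conjSAH U hU) := by
    show Continuous fun x : Matrix m m ℂ => U * x * star U
    exact (continuous_const.mul continuous_id).mul continuous_const
  have key := StarAlgHomClass.map_cfc (conjSAH U hU) (fun x : ℝ => x ^ r) A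
    (continuousOn_of_finite _ (Matrix.finite_real_spectrum (A := A))) hcont hsa
    (by simpa [conjSAH] using hconj)
  rw [mpow_eq_cfc hconj', mpow_eq_cfc hA]
  simpa [conjSAH] using key.symm

lemma mpow_intertwine {V : Matrix m m ℂ} (hM : (star V * V).PosDef) (r : ℝ) :
    mpow (V * star V) r * V = V * mpow (star V * V) r := by
  set M := star V * V with hMdef
  have hMh := hM.isHermitian
  have hQstar : star (mpow M (-(1/2))) = mpow M (-(1/2)) := star_mpow hMh _
  have hQP : mpow M (-(1/2)) * mpow M (1/2) = 1 := by
    rw [mpow_mul_mpow hM, neg_add_cancel, mpow_zero hMh]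
  -- the unitary factor
  set U := V * mpow M (-(1/2)) with hUdef
  have hstarU : star U = mpow M (-(1/2)) * star V := by
    rw [hUdef, StarMul.star_mul, hQstar]
  have hQMQ : mpow M (-(1/2)) * M * mpow M (-(1/2)) = 1 := by
    nth_rewrite 2 [← mpow_one hMh]
    rw [mpow_mul_mpow hM, mpow_mul_mpow hM]
    norm_num
    exact mpow_zero hMh
  have hU1 : star U * U = 1 := by
    rw [hstarU, hUdef]
    calc mpow M (-(1/2)) * star V * (V * mpow M (-(1/2)))
        = mpow M (-(1/2)) * M * mpow M (-(1/2)) := by rw [hMdef]; noncomm_ring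
      _ = 1 := hQMQ
  have hUmem : U ∈ unitary (Matrix m m ℂ) :=
    Unitary.mem_iff.mpr ⟨hU1, mul_eq_one_comm.mp hU1⟩
  have hVV : V * star V = U * M * star U := by
    rw [hstarU, hUdef]
    calc V * star V = V * (mpow M (-(1/2)) * M * mpow M (-(1/2))) * star V := by
          rw [hQMQ, mul_one]
      _ = V * mpow M (-(1/2)) * M * (mpow M (-(1/2)) * star V) := by noncomm_ring
  have hUV : star U * V = mpow M (1/2) := by
    rw [hstarU]
    calc mpow M (-(1/2)) * star V * V = mpow M (-(1/2)) * mpow M 1 := by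
          rw [mul_assoc, ← hMdef, mpow_one hMh]
      _ = mpow M (1/2) := by rw [mpow_mul_mpow hM]; norm_num
  calc mpow (V * star V) r * V = U * mpow M r * star U * V := by
        rw [hVV, mpow_unitary_conj hUmem hMh]
    _ = U * mpow M r * mpow M (1/2) := by rw [mul_assoc, hUV]
    _ = V * (mpow M (-(1/2)) * (mpow M r * mpow M (1/2))) := by
        rw [hUdef]; noncomm_ring
    _ = V * mpow M r := by
        rw [mpow_mul_mpow hM, mpow_mul_mpow hM]
        norm_num

end Aux

/-- `A♯_λ B = (AB⁻¹)^{1-λ} B`, where the power of `AB⁻¹` is defined via its similarity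
`AB⁻¹ = B^{1/2}(B^{-1/2}AB^{-1/2})B^{-1/2}` to the positive definite matrix
`B^{-1/2}AB^{-1/2}`. -/
theorem gmean_eq_pow_mul {m : Type*} [Fintype m] [DecidableEq m]
    (A B : Matrix m m ℂ) (hA : A.PosDef) (hB : B.PosDef) (lam : ℝ) :
    gmean A B lam =
      (mpow B (1/2) * mpow (mpow B (-(1/2)) * A * mpow B (-(1/2))) (1 - lam) * mpow B (-(1/2)))
        * B := by
  unfold gmean
  have hAh := hA.isHermitian
  have hBh := hB.isHermitian
  set M := mpow A (-(1/2)) * B * mpow A (-(1/2)) with hMdef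
  set N := mpow B (-(1/2)) * A * mpow B (-(1/2)) with hNdef
  have hM : M.PosDef := by
    have := posDef_conj hB (mpow_isUnit hA (-(1/2)))
    rwa [(mpow_isHermitian hAh (-(1/2))).eq] at this
  have hN : N.PosDef := by
    have := posDef_conj hA (mpow_isUnit hB (-(1/2)))
    rwa [(mpow_isHermitian hBh (-(1/2))).eq] at this
  have hMh := hM.isHermitian
  have hNh := hN.isHermitian
  set V := mpow B (-(1/2)) * mpow A (1/2) with hVdef
  have hstarV : star V = mpow A (1/2) * mpow B (-(1/2)) := by
    rw [hVdef, StarMul.star_mul, star_mpow hAh, star_mpow hBh]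
  have hAA : mpow A (1/2) * mpow A (1/2) = A := by
    rw [mpow_mul_mpow hA, show (1:ℝ)/2 + 1/2 = 1 by norm_num, mpow_one hAh]
  have hAiAh : mpow A (-(1/2)) * mpow A (1/2) = 1 := by
    rw [mpow_mul_mpow hA, neg_add_cancel, mpow_zero hAh]
  have hBhBi : mpow B (1/2) * mpow B (-(1/2)) = 1 := by
    rw [mpow_mul_mpow hB, add_neg_cancel, mpow_zero hBh]
  have hBiBh : mpow B (-(1/2)) * mpow B (1/2) = 1 := by
    rw [mpow_mul_mpow hB, neg_add_cancel, mpow_zero hBh]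
  have hBiBi : mpow B (-(1/2)) * mpow B (-(1/2)) = mpow B (-1) := by
    rw [mpow_mul_mpow hB]; norm_num
  have hBB : B * mpow B (-1) = 1 := by
    nth_rewrite 1 [← mpow_one hBh]
    rw [mpow_mul_mpow hB, add_neg_cancel, mpow_zero hBh]
  have hBiB : mpow B (-(1/2)) * B = mpow B (1/2) := by
    nth_rewrite 2 [← mpow_one hBh]
    rw [mpow_mul_mpow hB]
    norm_num
  have hVV : V * star V = N := by
    rw [hVdef, hstarV, hNdef]
    calc mpow B (-(1/2)) * mpow A (1/2) * (mpow A (1/2) * mpow B (-(1/2)))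
        = mpow B (-(1/2)) * (mpow A (1/2) * mpow A (1/2)) * mpow B (-(1/2)) := by noncomm_ring
      _ = mpow B (-(1/2)) * A * mpow B (-(1/2)) := by rw [hAA]
  have hM' : star V * V = mpow M (-1) := by
    have h2 : mpow M (-1) * M = 1 := by
      nth_rewrite 2 [← mpow_one hMh]
      rw [mpow_mul_mpow hM, neg_add_cancel, mpow_zero hMh]
    have hMM' : M * (star V * V) = 1 := by
      rw [hstarV, hVdef, hMdef]
      calc mpow A (-(1/2)) * B * mpow A (-(1/2)) *
            (mpow A (1/2) * mpow B (-(1/2)) * (mpow B (-(1/2)) * mpow A (1/2)))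
          = mpow A (-(1/2)) * (B * ((mpow A (-(1/2)) * mpow A (1/2)) *
              (mpow B (-(1/2)) * mpow B (-(1/2))))) * mpow A (1/2) := by noncomm_ring
        _ = mpow A (-(1/2)) * (B * mpow B (-1)) * mpow A (1/2) := by
              rw [hAiAh, one_mul, hBiBi]
        _ = mpow A (-(1/2)) * mpow A (1/2) := by rw [hBB, mul_one]
        _ = 1 := hAiAh
    calc star V * V = 1 * (star V * V) := (one_mul _).symm
      _ = mpow M (-1) * M * (star V * V) := by rw [h2]
      _ = mpow M (-1) * (M * (star V * V)) := by rw [mul_assoc]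
      _ = mpow M (-1) := by rw [hMM', mul_one]
  have hM'pos : (star V * V).PosDef := by rw [hM']; exact mpow_posDef hM (-1)
  have key : mpow N (-lam) * V = V * mpow M lam := by
    have h1 := mpow_intertwine hM'pos (-lam)
    rw [hVV] at h1
    rw [h1, hM', mpow_mpow hM, show (-1:ℝ) * (-lam) = lam by ring]
  have hsplit : mpow N (1 - lam) = mpow N (-lam) * N := by
    nth_rewrite 3 [← mpow_one hNh]
    rw [mpow_mul_mpow hN, show -lam + 1 = 1 - lam by ring]
  have hBhV : mpow B (1/2) * V = mpow A (1/2) := by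
    rw [hVdef, ← mul_assoc, hBhBi, one_mul]
  have hVBh : star V * mpow B (1/2) = mpow A (1/2) := by
    rw [hstarV, mul_assoc, hBiBh, mul_one]
  calc mpow A (1/2) * mpow M lam * mpow A (1/2)
      = (mpow B (1/2) * V) * mpow M lam * (star V * mpow B (1/2)) := by rw [hBhV, hVBh]
    _ = mpow B (1/2) * ((V * mpow M lam) * star V) * mpow B (1/2) := by noncomm_ring
    _ = mpow B (1/2) * ((mpow N (-lam) * V) * star V) * mpow B (1/2) := by rw [key]
    _ = mpow B (1/2) * (mpow N (-lam) * (V * star V)) * mpow B (1/2) := by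
          rw [mul_assoc (mpow N (-lam))]
    _ = mpow B (1/2) * mpow N (1 - lam) * mpow B (1/2) := by
          rw [hVV, ← hsplit]
    _ = mpow B (1/2) * mpow N (1 - lam) * (mpow B (-(1/2)) * B) := by rw [hBiB]
    _ = mpow B (1/2) * mpow N (1 - lam) * mpow B (-(1/2)) * B := by noncomm_ring
end

section
/- Let Y be a positive definite n×n matrix and p ∈ [1,2). Then the function ω ↦ Tr(Y ω^{1−2/p}) on the set of positive definite density matrices (positive definite matrices of trace 1) is strictly convex. -/
open Matrix ComplexOrder

section TPAuxSection
open MeasureTheory Set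
open scoped MatrixOrder

namespace TPAux



variable {n : ℕ}

lemma herm_dot {M : Matrix (Fin n) (Fin n) ℂ} (hM : M.IsHermitian) (a b : Fin n → ℂ) :
    star a ⬝ᵥ (M *ᵥ b) = star (star b ⬝ᵥ (M *ᵥ a)) := by
  rw [star_dotProduct]
  congr 1
  rw [star_mulVec, dotProduct_mulVec, hM.eq]

lemma dot_flip (a b : Fin n → ℂ) : star a ⬝ᵥ b = star (star b ⬝ᵥ a) := by
  exact star_dotProduct a b

lemma mul_inv_cancel_pd {M : Matrix (Fin n) (Fin n) ℂ} (hM : M.PosDef) : M * M⁻¹ = 1 :=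
  Matrix.mul_nonsing_inv M ((Matrix.isUnit_iff_isUnit_det M).mp hM.isUnit)

lemma mulVec_inv_pd {M : Matrix (Fin n) (Fin n) ℂ} (hM : M.PosDef) (v : Fin n → ℂ) :
    M *ᵥ (M⁻¹ *ᵥ v) = v := by
  rw [mulVec_mulVec, mul_inv_cancel_pd hM, one_mulVec]

/-- expansion identity -/
lemma quad_expand {M : Matrix (Fin n) (Fin n) ℂ} (hM : M.PosDef) (v x : Fin n → ℂ) :
    (star (x - M⁻¹ *ᵥ v) ⬝ᵥ (M *ᵥ (x - M⁻¹ *ᵥ v))).re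
      = (star x ⬝ᵥ (M *ᵥ x)).re - 2 * (star x ⬝ᵥ v).re
        + (star v ⬝ᵥ (M⁻¹ *ᵥ v)).re := by
  set u := M⁻¹ *ᵥ v with hu
  have hMu : M *ᵥ u = v := mulVec_inv_pd hM v
  have e1 : star (x - u) ⬝ᵥ (M *ᵥ (x - u))
      = star x ⬝ᵥ (M *ᵥ x) - star x ⬝ᵥ (M *ᵥ u) - star u ⬝ᵥ (M *ᵥ x)
        + star u ⬝ᵥ (M *ᵥ u) := by
    rw [star_sub, sub_dotProduct, mulVec_sub, dotProduct_sub, dotProduct_sub]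
    ring
  rw [e1, hMu]
  have e2 : star u ⬝ᵥ (M *ᵥ x) = star (star x ⬝ᵥ (M *ᵥ u)) := herm_dot hM.1 u x
  have e3 : star u ⬝ᵥ v = star (star v ⬝ᵥ u) := dot_flip u v
  rw [← hMu, e2, hMu, e3]
  simp [Complex.sub_re, Complex.add_re, Complex.conj_re]
  ring

lemma quad_lower {M : Matrix (Fin n) (Fin n) ℂ} (hM : M.PosDef) (v x : Fin n → ℂ) :
    2 * (star x ⬝ᵥ v).re - (star x ⬝ᵥ (M *ᵥ x)).re ≤ (star v ⬝ᵥ (M⁻¹ *ᵥ v)).re := by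
  have h := hM.posSemidef.re_dotProduct_nonneg (x - M⁻¹ *ᵥ v)
  rw [RCLike.re_to_complex, quad_expand hM v x] at h
  linarith

lemma quad_lower_strict {M : Matrix (Fin n) (Fin n) ℂ} (hM : M.PosDef) (v x : Fin n → ℂ)
    (hx : x ≠ M⁻¹ *ᵥ v) :
    2 * (star x ⬝ᵥ v).re - (star x ⬝ᵥ (M *ᵥ x)).re < (star v ⬝ᵥ (M⁻¹ *ᵥ v)).re := by
  have h := hM.re_dotProduct_pos (x := x - M⁻¹ *ᵥ v) (sub_ne_zero.mpr hx)
  rw [RCLike.re_to_complex, quad_expand hM v x] at h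
  linarith

lemma posDef_smul {M : Matrix (Fin n) (Fin n) ℂ} (hM : M.PosDef) {r : ℝ} (hr : 0 < r) :
    (r • M).PosDef := by
  refine Matrix.PosDef.of_dotProduct_mulVec_pos ?_ (fun x hx => ?_)
  · have : (r • M)ᴴ = star r • Mᴴ := conjTranspose_smul r M
    rw [Matrix.IsHermitian, this, star_trivial, hM.1.eq]
  · have h1 : star x ⬝ᵥ ((r • M) *ᵥ x) = r • (star x ⬝ᵥ (M *ᵥ x)) := by
      rw [smul_mulVec, dotProduct_smul]
    rw [h1]
    have h2 := hM.dotProduct_mulVec_pos hx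
    rw [Complex.pos_iff] at h2 ⊢
    constructor
    · rw [Complex.smul_re]; exact mul_pos hr h2.1
    · rw [Complex.smul_im, ← h2.2, smul_zero]

lemma posDef_comb {M₀ M₁ : Matrix (Fin n) (Fin n) ℂ} (h₀ : M₀.PosDef) (h₁ : M₁.PosDef)
    {s : ℝ} (hs0 : 0 < s) (hs1 : s < 1) : ((1 - s) • M₀ + s • M₁).PosDef :=
  (posDef_smul h₀ (by linarith)).add (posDef_smul h₁ hs0)

lemma re_dot_comb {M₀ M₁ : Matrix (Fin n) (Fin n) ℂ} (s : ℝ) (x : Fin n → ℂ) :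
    (star x ⬝ᵥ (((1 - s) • M₀ + s • M₁) *ᵥ x)).re
      = (1 - s) * (star x ⬝ᵥ (M₀ *ᵥ x)).re + s * (star x ⬝ᵥ (M₁ *ᵥ x)).re := by
  rw [add_mulVec, smul_mulVec, smul_mulVec, dotProduct_add,
    dotProduct_smul, dotProduct_smul, Complex.add_re, Complex.smul_re, Complex.smul_re]
  simp [smul_eq_mul]

/-- per-vector convexity inequality -/
lemma convex_vec_le {M₀ M₁ : Matrix (Fin n) (Fin n) ℂ} (h₀ : M₀.PosDef) (h₁ : M₁.PosDef)
    {s : ℝ} (hs0 : 0 < s) (hs1 : s < 1) (v : Fin n → ℂ) :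
    (star v ⬝ᵥ ((((1 - s) • M₀ + s • M₁)⁻¹) *ᵥ v)).re
      ≤ (1 - s) * (star v ⬝ᵥ (M₀⁻¹ *ᵥ v)).re + s * (star v ⬝ᵥ (M₁⁻¹ *ᵥ v)).re := by
  have hMs := posDef_comb h₀ h₁ hs0 hs1
  set Ms := (1 - s) • M₀ + s • M₁ with hMsdef
  set x := Ms⁻¹ *ᵥ v with hx
  have hvx : Ms *ᵥ x = v := mulVec_inv_pd hMs v
  have lhs_eq : (star v ⬝ᵥ (Ms⁻¹ *ᵥ v)).re
      = 2 * (star x ⬝ᵥ v).re - (star x ⬝ᵥ (Ms *ᵥ x)).re := by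
    rw [hvx, ← hx]
    have : star v ⬝ᵥ x = star (star x ⬝ᵥ v) := star_dotProduct v x
    rw [this, RCLike.star_def, Complex.conj_re]
    ring
  have key : (star v ⬝ᵥ (Ms⁻¹ *ᵥ v)).re
      = (1 - s) * (2 * (star x ⬝ᵥ v).re - (star x ⬝ᵥ (M₀ *ᵥ x)).re)
        + s * (2 * (star x ⬝ᵥ v).re - (star x ⬝ᵥ (M₁ *ᵥ x)).re) := by
    rw [lhs_eq, re_dot_comb]; ring
  have q0 := quad_lower h₀ v x
  have q1 := quad_lower h₁ v x
  rw [key]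
  have c0 : (0:ℝ) ≤ 1 - s := by linarith
  nlinarith [mul_le_mul_of_nonneg_left q0 c0, mul_le_mul_of_nonneg_left q1 (le_of_lt hs0)]

lemma convex_vec_lt {M₀ M₁ : Matrix (Fin n) (Fin n) ℂ} (h₀ : M₀.PosDef) (h₁ : M₁.PosDef)
    {s : ℝ} (hs0 : 0 < s) (hs1 : s < 1) (v : Fin n → ℂ)
    (hv : M₀⁻¹ *ᵥ v ≠ M₁⁻¹ *ᵥ v) :
    (star v ⬝ᵥ ((((1 - s) • M₀ + s • M₁)⁻¹) *ᵥ v)).re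
      < (1 - s) * (star v ⬝ᵥ (M₀⁻¹ *ᵥ v)).re + s * (star v ⬝ᵥ (M₁⁻¹ *ᵥ v)).re := by
  have hMs := posDef_comb h₀ h₁ hs0 hs1
  set Ms := (1 - s) • M₀ + s • M₁ with hMsdef
  set x := Ms⁻¹ *ᵥ v with hx
  have hvx : Ms *ᵥ x = v := mulVec_inv_pd hMs v
  have lhs_eq : (star v ⬝ᵥ (Ms⁻¹ *ᵥ v)).re
      = 2 * (star x ⬝ᵥ v).re - (star x ⬝ᵥ (Ms *ᵥ x)).re := by
    rw [hvx, ← hx]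
    have : star v ⬝ᵥ x = star (star x ⬝ᵥ v) := star_dotProduct v x
    rw [this, RCLike.star_def, Complex.conj_re]
    ring
  have key : (star v ⬝ᵥ (Ms⁻¹ *ᵥ v)).re
      = (1 - s) * (2 * (star x ⬝ᵥ v).re - (star x ⬝ᵥ (M₀ *ᵥ x)).re)
        + s * (2 * (star x ⬝ᵥ v).re - (star x ⬝ᵥ (M₁ *ᵥ x)).re) := by
    rw [lhs_eq, re_dot_comb]; ring
  have hx01 : x ≠ M₀⁻¹ *ᵥ v ∨ x ≠ M₁⁻¹ *ᵥ v := by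
    by_contra h
    push_neg at h
    exact hv (h.1 ▸ h.2 ▸ rfl)
  have c0 : (0:ℝ) < 1 - s := by linarith
  rw [key]
  rcases hx01 with h | h
  · have q0 := quad_lower_strict h₀ v x h
    have q1 := quad_lower h₁ v x
    nlinarith [mul_lt_mul_of_pos_left q0 c0, mul_le_mul_of_nonneg_left q1 (le_of_lt hs0)]
  · have q0 := quad_lower h₀ v x
    have q1 := quad_lower_strict h₁ v x h
    nlinarith [mul_le_mul_of_nonneg_left q0 (le_of_lt c0), mul_lt_mul_of_pos_left q1 hs0]

/-- Trace of `Y * N` as a sum of quadratic forms in the columns of `√Y`. -/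
lemma trace_Y_mul {Y : Matrix (Fin n) (Fin n) ℂ} (hY : Y.PosDef)
    (N : Matrix (Fin n) (Fin n) ℂ) :
    (Y * N).trace = ∑ k, star (fun j => CFC.sqrt Y j k)
      ⬝ᵥ (N *ᵥ (fun j => CFC.sqrt Y j k)) := by
  set R := CFC.sqrt Y with hRdef
  have hRR : R * R = Y := CFC.sqrt_mul_sqrt_self Y hY.posSemidef.nonneg
  have hR : R.IsHermitian := (CFC.sqrt_nonneg Y).posSemidef.1
  have h1 : (Y * N).trace = (R * N * R).trace := by
    rw [← hRR, Matrix.mul_assoc, Matrix.trace_mul_comm, Matrix.mul_assoc]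
  rw [h1]
  rw [Matrix.trace]
  apply Finset.sum_congr rfl
  intro k _
  have hst : ∀ a b : Fin n, star (R a b) = R b a := by
    intro a b
    have := congrArg (fun W => W b a) hR.eq
    simpa [Matrix.conjTranspose_apply] using this
  simp only [Matrix.diag_apply, Matrix.mul_apply, dotProduct, Matrix.mulVec, Pi.star_apply, hst]
  simp_rw [Finset.sum_mul]
  rw [Finset.sum_comm]
  apply Finset.sum_congr rfl
  intro a _
  rw [Finset.mul_sum]
  apply Finset.sum_congr rfl
  intro b _
  ring

lemma sqrt_isUnit_det {Y : Matrix (Fin n) (Fin n) ℂ} (hY : Y.PosDef) :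
    IsUnit (CFC.sqrt Y).det := by
  have hRR : CFC.sqrt Y * CFC.sqrt Y = Y := CFC.sqrt_mul_sqrt_self Y hY.posSemidef.nonneg
  have hdet : (CFC.sqrt Y).det * (CFC.sqrt Y).det = Y.det := by
    rw [← Matrix.det_mul, hRR]
  have hY0 : Y.det ≠ 0 := by
    have := hY.det_pos
    exact_mod_cast ne_of_gt (by exact_mod_cast this : (0:ℂ) < Y.det)
  refine isUnit_iff_ne_zero.mpr ?_
  intro h
  rw [h, mul_zero] at hdet
  exact hY0 hdet.symm

/-- Strict convexity of `M ↦ Re Tr (Y M⁻¹)` on positive definite matrices. -/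
lemma trace_inv_strict {Y : Matrix (Fin n) (Fin n) ℂ} (hY : Y.PosDef)
    {M₀ M₁ : Matrix (Fin n) (Fin n) ℂ} (h₀ : M₀.PosDef) (h₁ : M₁.PosDef)
    (hne : M₀ ≠ M₁) {s : ℝ} (hs0 : 0 < s) (hs1 : s < 1) :
    ((Y * ((1 - s) • M₀ + s • M₁)⁻¹).trace).re
      < (1 - s) * ((Y * M₀⁻¹).trace).re + s * ((Y * M₁⁻¹).trace).re := by
  set R := CFC.sqrt Y with hRdef
  set col : Fin n → Fin n → ℂ := fun k j => R j k with hcol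
  rw [trace_Y_mul hY, trace_Y_mul hY, trace_Y_mul hY]
  rw [Complex.re_sum, Complex.re_sum, Complex.re_sum, Finset.mul_sum, Finset.mul_sum,
    ← Finset.sum_add_distrib]
  have hexists : ∃ k, M₀⁻¹ *ᵥ col k ≠ M₁⁻¹ *ᵥ col k := by
    by_contra h
    push_neg at h
    have hmat : M₀⁻¹ * R = M₁⁻¹ * R := by
      ext i k
      have := congrFun (h k) i
      simpa [Matrix.mul_apply, Matrix.mulVec, dotProduct, hcol] using this
    have hinv : M₀⁻¹ = M₁⁻¹ := by
      have hRu : IsUnit R.det := sqrt_isUnit_det hY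
      calc M₀⁻¹ = M₀⁻¹ * R * R⁻¹ := by
                  rw [Matrix.mul_assoc, Matrix.mul_nonsing_inv _ hRu, Matrix.mul_one]
        _ = M₁⁻¹ * R * R⁻¹ := by rw [hmat]
        _ = M₁⁻¹ := by rw [Matrix.mul_assoc, Matrix.mul_nonsing_inv _ hRu, Matrix.mul_one]
    apply hne
    have u0 := (Matrix.isUnit_iff_isUnit_det M₀).mp h₀.isUnit
    have u1 := (Matrix.isUnit_iff_isUnit_det M₁).mp h₁.isUnit
    rw [← Matrix.nonsing_inv_nonsing_inv M₀ u0, ← Matrix.nonsing_inv_nonsing_inv M₁ u1, hinv]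
  obtain ⟨k₀, hk₀⟩ := hexists
  apply Finset.sum_lt_sum
  · intro k _
    exact convex_vec_le h₀ h₁ hs0 hs1 (col k)
  · exact ⟨k₀, Finset.mem_univ k₀, convex_vec_lt h₀ h₁ hs0 hs1 (col k₀) hk₀⟩







variable {n : ℕ} {A Y : Matrix (Fin n) (Fin n) ℂ}

/-- diagonal entries of `U* Y U`. -/
noncomputable def cY (Y : Matrix (Fin n) (Fin n) ℂ) (h : A.IsHermitian) (k : Fin n) : ℝ :=
  ((star (h.eigenvectorUnitary : Matrix (Fin n) (Fin n) ℂ) * Y *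
    (h.eigenvectorUnitary : Matrix (Fin n) (Fin n) ℂ)) k k).re

lemma trace_UDU (Y : Matrix (Fin n) (Fin n) ℂ) (h : A.IsHermitian) (d : Fin n → ℝ) :
    ((Y * ((h.eigenvectorUnitary : Matrix (Fin n) (Fin n) ℂ) *
        Matrix.diagonal (fun i => ((d i : ℝ) : ℂ)) *
        star (h.eigenvectorUnitary : Matrix (Fin n) (Fin n) ℂ))).trace).re
      = ∑ k, d k * cY Y h k := by
  set U : Matrix (Fin n) (Fin n) ℂ := (h.eigenvectorUnitary : Matrix (Fin n) (Fin n) ℂ) with hU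
  set D : Matrix (Fin n) (Fin n) ℂ := Matrix.diagonal (fun i => ((d i : ℝ) : ℂ)) with hD
  have e1 : Y * (U * D * star U) = (Y * U * D) * star U := by
    simp only [Matrix.mul_assoc]
  have e2 : ((Y * U * D) * star U).trace = ((star U * Y * U) * D).trace := by
    rw [Matrix.trace_mul_comm]
    simp only [Matrix.mul_assoc]
  rw [e1, e2, Matrix.trace, Complex.re_sum]
  apply Finset.sum_congr rfl
  intro k _
  rw [Matrix.diag_apply, Matrix.mul_diagonal]
  rw [cY, Complex.mul_re, Complex.ofReal_re, Complex.ofReal_im, mul_zero, sub_zero]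
  ring

lemma cY_pos (hY : Y.PosDef) (h : A.IsHermitian) (k : Fin n) : 0 < cY Y h k := by
  set U : Matrix (Fin n) (Fin n) ℂ := (h.eigenvectorUnitary : Matrix (Fin n) (Fin n) ℂ) with hU
  set v : Fin n → ℂ := fun j => U j k with hv
  have hdot : (star U * Y * U) k k = star v ⬝ᵥ (Y *ᵥ v) := by
    simp only [Matrix.mul_apply, Matrix.star_apply, dotProduct, Matrix.mulVec, Pi.star_apply, hv]
    simp_rw [Finset.sum_mul]
    rw [Finset.sum_comm]
    apply Finset.sum_congr rfl
    intro a _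
    rw [Finset.mul_sum]
    apply Finset.sum_congr rfl
    intro b _
    ring
  have hvne : v ≠ 0 := by
    intro h0
    have h1 : star U * U = 1 := Unitary.coe_star_mul_self h.eigenvectorUnitary
    have h2 : (star U * U) k k = ∑ i, star (U i k) * U i k := by
      simp [Matrix.mul_apply, Matrix.star_apply]
    rw [h1] at h2
    simp only [Matrix.one_apply_eq] at h2
    have : ∀ i, U i k = 0 := fun i => congrFun h0 i
    simp [this] at h2
  have := hY.re_dotProduct_pos hvne
  rw [RCLike.re_to_complex] at this
  rw [cY, hdot]
  exact this

lemma mpow_eq (hA : A.PosDef) (r : ℝ) :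
    mpow A r = (hA.1.eigenvectorUnitary : Matrix (Fin n) (Fin n) ℂ) *
      Matrix.diagonal (fun i => ((hA.1.eigenvalues i ^ r : ℝ) : ℂ)) *
      star (hA.1.eigenvectorUnitary : Matrix (Fin n) (Fin n) ℂ) := by
  rw [mpow, dif_pos hA.1]

lemma addt_decomp (hA : A.PosDef) (t : ℝ) :
    A + t • (1 : Matrix (Fin n) (Fin n) ℂ)
      = (hA.1.eigenvectorUnitary : Matrix (Fin n) (Fin n) ℂ) *
        Matrix.diagonal (fun i => ((hA.1.eigenvalues i + t : ℝ) : ℂ)) *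
        star (hA.1.eigenvectorUnitary : Matrix (Fin n) (Fin n) ℂ) := by
  set U : Matrix (Fin n) (Fin n) ℂ := (hA.1.eigenvectorUnitary : Matrix (Fin n) (Fin n) ℂ) with hU
  have hUs : U * star U = 1 := Unitary.coe_mul_star_self hA.1.eigenvectorUnitary
  have h1 : t • (1 : Matrix (Fin n) (Fin n) ℂ)
      = U * Matrix.diagonal (fun _ => (t : ℂ)) * star U := by
    rw [← Matrix.smul_one_eq_diagonal]
    have : U * ((t:ℂ) • (1 : Matrix (Fin n) (Fin n) ℂ)) * star U
        = (t:ℂ) • (U * star U) := by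
      rw [Matrix.mul_smul, Matrix.smul_mul, Matrix.mul_one]
    rw [this, hUs]
    ext i j
    simp [Complex.real_smul]
  conv_lhs => rw [hA.1.spectral_theorem, Unitary.conjStarAlgAut_apply, h1]
  rw [← Matrix.add_mul, ← Matrix.mul_add, Matrix.diagonal_add]
  have heq : (fun i => (RCLike.ofReal ∘ hA.1.eigenvalues) i + (t:ℂ))
      = fun i => ((hA.1.eigenvalues i + t : ℝ) : ℂ) := by
    funext i
    simp [Function.comp, Complex.ofReal_add]
  rw [heq]

lemma addt_inv_eq (hA : A.PosDef) {t : ℝ} (ht : 0 ≤ t) :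
    (A + t • (1 : Matrix (Fin n) (Fin n) ℂ))⁻¹
      = (hA.1.eigenvectorUnitary : Matrix (Fin n) (Fin n) ℂ) *
        Matrix.diagonal (fun i => (((hA.1.eigenvalues i + t)⁻¹ : ℝ) : ℂ)) *
        star (hA.1.eigenvectorUnitary : Matrix (Fin n) (Fin n) ℂ) := by
  set U : Matrix (Fin n) (Fin n) ℂ := (hA.1.eigenvectorUnitary : Matrix (Fin n) (Fin n) ℂ) with hU
  have hsU : star U * U = 1 := Unitary.coe_star_mul_self hA.1.eigenvectorUnitary
  have hUs : U * star U = 1 := Unitary.coe_mul_star_self hA.1.eigenvectorUnitary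
  apply Matrix.inv_eq_right_inv
  rw [addt_decomp hA t]
  have hne : ∀ i, ((hA.1.eigenvalues i + t : ℝ) : ℂ) ≠ 0 := by
    intro i
    have := hA.eigenvalues_pos i
    exact_mod_cast ne_of_gt (by positivity : (0:ℝ) < hA.1.eigenvalues i + t)
  calc (U * Matrix.diagonal (fun i => ((hA.1.eigenvalues i + t : ℝ) : ℂ)) * star U) *
        (U * Matrix.diagonal (fun i => (((hA.1.eigenvalues i + t)⁻¹ : ℝ) : ℂ)) * star U)
      = U * (Matrix.diagonal (fun i => ((hA.1.eigenvalues i + t : ℝ) : ℂ)) * ((star U * U) *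
          (Matrix.diagonal (fun i => (((hA.1.eigenvalues i + t)⁻¹ : ℝ) : ℂ)) * star U))) := by
        simp only [Matrix.mul_assoc]
    _ = U * (Matrix.diagonal (fun i => ((hA.1.eigenvalues i + t : ℝ) : ℂ)) *
          Matrix.diagonal (fun i => (((hA.1.eigenvalues i + t)⁻¹ : ℝ) : ℂ))) * star U := by
        rw [hsU, Matrix.one_mul]
        simp only [Matrix.mul_assoc]
    _ = 1 := by
        rw [Matrix.diagonal_mul_diagonal]
        have : (fun i => ((hA.1.eigenvalues i + t : ℝ) : ℂ) * (((hA.1.eigenvalues i + t)⁻¹ : ℝ) : ℂ))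
            = fun _ => (1:ℂ) := by
          funext i
          rw [← Complex.ofReal_mul]
          rw [mul_inv_cancel₀ (by exact_mod_cast hne i)]
          norm_num
        rw [this, Matrix.diagonal_one, Matrix.mul_one, hUs]

lemma trace_mpow_eq (Y : Matrix (Fin n) (Fin n) ℂ) (hA : A.PosDef) (r : ℝ) :
    ((Y * mpow A r).trace).re = ∑ k, (hA.1.eigenvalues k) ^ r * cY Y hA.1 k := by
  rw [mpow_eq hA r, trace_UDU Y hA.1 (fun i => hA.1.eigenvalues i ^ r)]

lemma trace_inv_addt_eq (Y : Matrix (Fin n) (Fin n) ℂ) (hA : A.PosDef) {t : ℝ} (ht : 0 ≤ t) :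
    ((Y * (A + t • (1 : Matrix (Fin n) (Fin n) ℂ))⁻¹).trace).re
      = ∑ k, (hA.1.eigenvalues k + t)⁻¹ * cY Y hA.1 k := by
  rw [addt_inv_eq hA ht, trace_UDU Y hA.1 (fun i => (hA.1.eigenvalues i + t)⁻¹)]






noncomputable def Bq (q : ℝ) : ℝ := ∫ s in Ioi (0:ℝ), s ^ q / (1 + s)

lemma integrableOn_base {q : ℝ} (hq1 : -1 < q) (hq0 : q < 0) :
    IntegrableOn (fun s : ℝ => s ^ q / (1 + s)) (Ioi (0:ℝ)) := by
  have hmeas : ∀ (S : Set ℝ), S ⊆ Ioi 0 → MeasurableSet S →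
      AEStronglyMeasurable (fun s : ℝ => s ^ q / (1 + s)) (volume.restrict S) := by
    intro S hS hSm
    apply ContinuousOn.aestronglyMeasurable ?_ hSm
    apply ContinuousOn.div
    · exact ContinuousOn.rpow_const continuousOn_id
        (fun x hx => Or.inl (ne_of_gt (hS hx)))
    · exact (continuous_const.add continuous_id).continuousOn
    · intro x hx
      have := hS hx
      simp only [mem_Ioi] at this
      positivity
  have h1 : IntegrableOn (fun s : ℝ => s ^ q / (1 + s)) (Ioc (0:ℝ) 1) := by
    have hint : IntegrableOn (fun s : ℝ => s ^ q) (Ioc (0:ℝ) 1) := by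
      have := intervalIntegral.intervalIntegrable_rpow' (a := 0) (b := 1) hq1
      rwa [intervalIntegrable_iff_integrableOn_Ioc_of_le zero_le_one] at this
    apply Integrable.mono' hint (hmeas _ Ioc_subset_Ioi_self measurableSet_Ioc)
    rw [ae_restrict_iff' measurableSet_Ioc]
    filter_upwards with s hs
    obtain ⟨hs0, hs1⟩ := hs
    rw [Real.norm_eq_abs, abs_of_nonneg (by positivity)]
    apply div_le_self (by positivity)
    linarith
  have h2 : IntegrableOn (fun s : ℝ => s ^ q / (1 + s)) (Ioi (1:ℝ)) := by
    have hint : IntegrableOn (fun s : ℝ => s ^ (q - 1)) (Ioi (1:ℝ)) :=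
      integrableOn_Ioi_rpow_of_lt (by linarith) one_pos
    apply Integrable.mono' hint (hmeas _ (fun x hx => mem_Ioi.mpr (lt_trans one_pos hx)) measurableSet_Ioi)
    rw [ae_restrict_iff' measurableSet_Ioi]
    filter_upwards with s hs
    simp only [mem_Ioi] at hs
    have hs0 : (0:ℝ) < s := lt_trans one_pos hs
    rw [Real.norm_eq_abs, abs_of_nonneg (by positivity)]
    have e1 : s ^ (q - 1) = s ^ q / s := by
      rw [Real.rpow_sub hs0, Real.rpow_one]
    rw [e1]
    apply div_le_div_of_nonneg_left (by positivity) hs0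
    linarith
  have := h1.union h2
  rwa [Set.Ioc_union_Ioi_eq_Ioi zero_le_one] at this

lemma Bq_pos {q : ℝ} (hq1 : -1 < q) (hq0 : q < 0) : 0 < Bq q := by
  rw [Bq, setIntegral_pos_iff_support_of_nonneg_ae ?nonneg (integrableOn_base hq1 hq0)]
  case nonneg =>
    filter_upwards [ae_restrict_mem measurableSet_Ioi] with s hs
    simp only [mem_Ioi] at hs
    have : (0:ℝ) ≤ s := le_of_lt hs
    simp only [Pi.zero_apply]
    positivity
  have hsub : Ioi (0:ℝ) ⊆ Function.support (fun s : ℝ => s ^ q / (1 + s)) ∩ Ioi 0 := by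
    intro s hs
    refine ⟨?_, hs⟩
    simp only [Function.mem_support]
    have hs' : (0:ℝ) < s := hs
    positivity
  calc (0:ENNReal) < volume (Ioi (0:ℝ)) := by rw [Real.volume_Ioi]; exact ENNReal.zero_lt_top
    _ ≤ volume (Function.support (fun s : ℝ => s ^ q / (1 + s)) ∩ Ioi 0) := measure_mono hsub

lemma scaled_eqOn {q L : ℝ} (hL : 0 < L) :
    ∀ t ∈ Ioi (0:ℝ), L ^ (q - 1) * ((L⁻¹ * t) ^ q / (1 + L⁻¹ * t)) = t ^ q * (L + t)⁻¹ := by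
  intro t ht
  simp only [mem_Ioi] at ht
  have e1 : (L⁻¹ * t) ^ q = (L ^ q)⁻¹ * t ^ q := by
    rw [Real.mul_rpow (by positivity) (le_of_lt ht), Real.inv_rpow (le_of_lt hL)]
  have e2 : 1 + L⁻¹ * t = L⁻¹ * (L + t) := by
    field_simp
  have e3 : L ^ (q - 1) = L ^ q / L := by
    rw [Real.rpow_sub hL, Real.rpow_one]
  have hLq : (0:ℝ) < L ^ q := Real.rpow_pos_of_pos hL q
  rw [e1, e2, e3]
  field_simp

lemma integrableOn_scaled {q L : ℝ} (hq1 : -1 < q) (hq0 : q < 0) (hL : 0 < L) :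
    IntegrableOn (fun t : ℝ => t ^ q * (L + t)⁻¹) (Ioi (0:ℝ)) := by
  have hbase := integrableOn_base hq1 hq0
  have hcomp : IntegrableOn (fun t : ℝ => (L⁻¹ * t) ^ q / (1 + L⁻¹ * t)) (Ioi (0:ℝ)) := by
    have := (integrableOn_Ioi_comp_mul_left_iff (fun s : ℝ => s ^ q / (1 + s)) 0
      (inv_pos.mpr hL)).mpr
    rw [mul_zero] at this
    exact this hbase
  have h3 : IntegrableOn (fun t : ℝ => L ^ (q - 1) * ((L⁻¹ * t) ^ q / (1 + L⁻¹ * t)))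
      (Ioi (0:ℝ)) := hcomp.const_mul (L ^ (q - 1))
  exact h3.congr_fun (scaled_eqOn hL) measurableSet_Ioi

lemma integral_scaled {q L : ℝ} (hq1 : -1 < q) (hq0 : q < 0) (hL : 0 < L) :
    ∫ t in Ioi (0:ℝ), t ^ q * (L + t)⁻¹ = L ^ q * Bq q := by
  have h1 : ∫ t in Ioi (0:ℝ), t ^ q * (L + t)⁻¹
      = ∫ t in Ioi (0:ℝ), L ^ (q - 1) * ((L⁻¹ * t) ^ q / (1 + L⁻¹ * t)) := by
    apply setIntegral_congr_fun measurableSet_Ioi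
    intro t ht
    exact (scaled_eqOn hL t ht).symm
  have h2 : ∫ t in Ioi (0:ℝ), (L⁻¹ * t) ^ q / (1 + L⁻¹ * t) = L * Bq q := by
    have := integral_comp_mul_left_Ioi (fun s : ℝ => s ^ q / (1 + s)) 0 (inv_pos.mpr hL)
    rw [mul_zero] at this
    rw [this, inv_inv, Bq, smul_eq_mul]
  rw [h1, integral_const_mul, h2]
  rw [Real.rpow_sub hL, Real.rpow_one]
  field_simp







variable {n : ℕ} {A Y : Matrix (Fin n) (Fin n) ℂ}



lemma trace_integrand_eq (Y : Matrix (Fin n) (Fin n) ℂ) (hA : A.PosDef) (q : ℝ) :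
    EqOn (fun t : ℝ => t ^ q * ((Y * (A + t • (1 : Matrix (Fin n) (Fin n) ℂ))⁻¹).trace).re)
      (fun t : ℝ => ∑ k, cY Y hA.1 k * (t ^ q * (hA.1.eigenvalues k + t)⁻¹))
      (Ioi (0:ℝ)) := by
  intro t ht
  simp only [mem_Ioi] at ht
  simp only
  rw [trace_inv_addt_eq Y hA (le_of_lt ht), Finset.mul_sum]
  apply Finset.sum_congr rfl
  intro k _
  ring

lemma integrableOn_traceG {q : ℝ} (hq1 : -1 < q) (hq0 : q < 0)
    (Y : Matrix (Fin n) (Fin n) ℂ) (hA : A.PosDef) :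
    IntegrableOn
      (fun t : ℝ => t ^ q * ((Y * (A + t • (1 : Matrix (Fin n) (Fin n) ℂ))⁻¹).trace).re)
      (Ioi (0:ℝ)) := by
  have hsum : IntegrableOn
      (fun t : ℝ => ∑ k, cY Y hA.1 k * (t ^ q * (hA.1.eigenvalues k + t)⁻¹)) (Ioi (0:ℝ)) := by
    apply integrable_finset_sum
    intro k _
    exact (integrableOn_scaled hq1 hq0 (hA.eigenvalues_pos k)).const_mul _
  exact hsum.congr_fun (fun t ht => ((trace_integrand_eq Y hA q) ht).symm) measurableSet_Ioi

lemma integral_traceG {q : ℝ} (hq1 : -1 < q) (hq0 : q < 0)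
    (Y : Matrix (Fin n) (Fin n) ℂ) (hA : A.PosDef) :
    ∫ t in Ioi (0:ℝ), t ^ q * ((Y * (A + t • (1 : Matrix (Fin n) (Fin n) ℂ))⁻¹).trace).re
      = Bq q * ((Y * mpow A q).trace).re := by
  rw [setIntegral_congr_fun measurableSet_Ioi (trace_integrand_eq Y hA q)]
  rw [integral_finset_sum _ (fun k _ =>
    ((integrableOn_scaled hq1 hq0 (hA.eigenvalues_pos k)).const_mul _))]
  have : ∀ k, (∫ t in Ioi (0:ℝ), cY Y hA.1 k * (t ^ q * (hA.1.eigenvalues k + t)⁻¹))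
      = cY Y hA.1 k * ((hA.1.eigenvalues k) ^ q * Bq q) := by
    intro k
    rw [integral_const_mul, integral_scaled hq1 hq0 (hA.eigenvalues_pos k)]
  simp only [this]
  rw [trace_mpow_eq Y hA q, Finset.mul_sum]
  apply Finset.sum_congr rfl
  intro k _
  ring

lemma smul_one_posSemidef {t : ℝ} (ht : 0 ≤ t) :
    (t • (1 : Matrix (Fin n) (Fin n) ℂ)).PosSemidef := by
  have h1 : t • (1 : Matrix (Fin n) (Fin n) ℂ) = Matrix.diagonal (fun _ => (t : ℂ)) := by
    rw [← Matrix.smul_one_eq_diagonal]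
    ext i j
    simp [Complex.real_smul]
  rw [h1]
  rw [Matrix.posSemidef_diagonal_iff]
  intro i
  exact_mod_cast ht

/-- main strict convexity, case `-1 < q < 0` -/
lemma main_lt {Y : Matrix (Fin n) (Fin n) ℂ} (hY : Y.PosDef) {q : ℝ}
    (hq1 : -1 < q) (hq0 : q < 0) {ω₀ ω₁ : Matrix (Fin n) (Fin n) ℂ}
    (h₀ : ω₀.PosDef) (h₁ : ω₁.PosDef) (hne : ω₀ ≠ ω₁)
    {s : ℝ} (hs0 : 0 < s) (hs1 : s < 1) :
    ((Y * mpow ((1 - s) • ω₀ + s • ω₁) q).trace).re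
      < (1 - s) * ((Y * mpow ω₀ q).trace).re + s * ((Y * mpow ω₁ q).trace).re := by
  have hAs : ((1 - s) • ω₀ + s • ω₁).PosDef := posDef_comb h₀ h₁ hs0 hs1
  set As := (1 - s) • ω₀ + s • ω₁ with hAsdef
  set f := fun t : ℝ => t ^ q * ((Y * (As + t • (1 : Matrix (Fin n) (Fin n) ℂ))⁻¹).trace).re
    with hf
  set g₀ := fun t : ℝ => t ^ q * ((Y * (ω₀ + t • (1 : Matrix (Fin n) (Fin n) ℂ))⁻¹).trace).re
    with hg₀
  set g₁ := fun t : ℝ => t ^ q * ((Y * (ω₁ + t • (1 : Matrix (Fin n) (Fin n) ℂ))⁻¹).trace).re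
    with hg₁
  have if_ : IntegrableOn f (Ioi 0) := integrableOn_traceG hq1 hq0 Y hAs
  have ig₀ : IntegrableOn g₀ (Ioi 0) := integrableOn_traceG hq1 hq0 Y h₀
  have ig₁ : IntegrableOn g₁ (Ioi 0) := integrableOn_traceG hq1 hq0 Y h₁
  have ig : IntegrableOn (fun t => (1 - s) * g₀ t + s * g₁ t) (Ioi 0) :=
    (ig₀.const_mul _).add (ig₁.const_mul _)
  have hpt : ∀ t ∈ Ioi (0:ℝ), f t < (1 - s) * g₀ t + s * g₁ t := by
    intro t ht
    simp only [mem_Ioi] at ht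
    have hM₀ : (ω₀ + t • (1 : Matrix (Fin n) (Fin n) ℂ)).PosDef :=
      h₀.add_posSemidef (smul_one_posSemidef (le_of_lt ht))
    have hM₁ : (ω₁ + t • (1 : Matrix (Fin n) (Fin n) ℂ)).PosDef :=
      h₁.add_posSemidef (smul_one_posSemidef (le_of_lt ht))
    have hneM : ω₀ + t • (1 : Matrix (Fin n) (Fin n) ℂ)
        ≠ ω₁ + t • (1 : Matrix (Fin n) (Fin n) ℂ) := by
      intro h
      exact hne (add_right_cancel h)
    have hcomb : (1 - s) • (ω₀ + t • (1 : Matrix (Fin n) (Fin n) ℂ))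
        + s • (ω₁ + t • (1 : Matrix (Fin n) (Fin n) ℂ))
        = As + t • (1 : Matrix (Fin n) (Fin n) ℂ) := by
      rw [hAsdef]
      module
    have hstrict := trace_inv_strict hY hM₀ hM₁ hneM hs0 hs1
    rw [hcomb] at hstrict
    have htq : 0 < t ^ q := Real.rpow_pos_of_pos ht q
    simp only [hf, hg₀, hg₁]
    calc t ^ q * ((Y * (As + t • (1 : Matrix (Fin n) (Fin n) ℂ))⁻¹).trace).re
        < t ^ q * ((1 - s) * ((Y * (ω₀ + t • (1 : Matrix (Fin n) (Fin n) ℂ))⁻¹).trace).re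
            + s * ((Y * (ω₁ + t • (1 : Matrix (Fin n) (Fin n) ℂ))⁻¹).trace).re) :=
          (mul_lt_mul_iff_right₀ htq).mpr hstrict
      _ = (1 - s) * (t ^ q * ((Y * (ω₀ + t • (1 : Matrix (Fin n) (Fin n) ℂ))⁻¹).trace).re)
            + s * (t ^ q * ((Y * (ω₁ + t • (1 : Matrix (Fin n) (Fin n) ℂ))⁻¹).trace).re) := by
          ring
  have hint_lt : ∫ t in Ioi (0:ℝ), f t < ∫ t in Ioi (0:ℝ), ((1 - s) * g₀ t + s * g₁ t) := by
    have hd : 0 < ∫ t in Ioi (0:ℝ), ((1 - s) * g₀ t + s * g₁ t - f t) := by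
      have igf : IntegrableOn (fun t : ℝ => (1 - s) * g₀ t + s * g₁ t - f t) (Ioi 0) :=
        ig.sub if_
      rw [setIntegral_pos_iff_support_of_nonneg_ae ?nn igf]
      case nn =>
        filter_upwards [ae_restrict_mem measurableSet_Ioi] with t ht
        simp only [Pi.zero_apply]
        have := hpt t ht
        linarith
      have hsub2 : Ioi (0:ℝ) ⊆ (Function.support fun t => (1 - s) * g₀ t + s * g₁ t - f t)
          ∩ Ioi 0 := by
        intro t ht
        refine ⟨?_, ht⟩
        simp only [Function.mem_support]
        have := hpt t ht
        intro h
        linarith [sub_eq_zero.mp h]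
      calc (0:ENNReal) < volume (Ioi (0:ℝ)) := by
            rw [Real.volume_Ioi]; exact ENNReal.zero_lt_top
        _ ≤ _ := measure_mono hsub2
    have hsub := integral_sub ig if_
    rw [hsub] at hd
    linarith
  have e1 : ∫ t in Ioi (0:ℝ), f t = Bq q * ((Y * mpow As q).trace).re :=
    integral_traceG hq1 hq0 Y hAs
  have e2 : ∫ t in Ioi (0:ℝ), ((1 - s) * g₀ t + s * g₁ t)
      = (1 - s) * (Bq q * ((Y * mpow ω₀ q).trace).re)
        + s * (Bq q * ((Y * mpow ω₁ q).trace).re) := by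
    rw [integral_add (ig₀.const_mul _) (ig₁.const_mul _), integral_const_mul, integral_const_mul,
      integral_traceG hq1 hq0 Y h₀, integral_traceG hq1 hq0 Y h₁]
  rw [e1, e2] at hint_lt
  have hB := Bq_pos hq1 hq0
  nlinarith [hint_lt]



lemma trace_mpow_neg_one {n : ℕ} {A : Matrix (Fin n) (Fin n) ℂ}
    (Y : Matrix (Fin n) (Fin n) ℂ) (hA : A.PosDef) :
    ((Y * mpow A (-1)).trace).re = ((Y * A⁻¹).trace).re := by
  rw [trace_mpow_eq Y hA (-1)]
  have h0 := trace_inv_addt_eq Y hA (t := 0) le_rfl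
  rw [zero_smul, add_zero] at h0
  rw [h0]
  apply Finset.sum_congr rfl
  intro k _
  rw [Real.rpow_neg_one, add_zero]

lemma main_lt_neg_one {n : ℕ} {Y : Matrix (Fin n) (Fin n) ℂ} (hY : Y.PosDef)
    {ω₀ ω₁ : Matrix (Fin n) (Fin n) ℂ}
    (h₀ : ω₀.PosDef) (h₁ : ω₁.PosDef) (hne : ω₀ ≠ ω₁)
    {s : ℝ} (hs0 : 0 < s) (hs1 : s < 1) :
    ((Y * mpow ((1 - s) • ω₀ + s • ω₁) (-1)).trace).re
      < (1 - s) * ((Y * mpow ω₀ (-1)).trace).re + s * ((Y * mpow ω₁ (-1)).trace).re := by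
  have hAs : ((1 - s) • ω₀ + s • ω₁).PosDef := posDef_comb h₀ h₁ hs0 hs1
  rw [trace_mpow_neg_one Y hAs, trace_mpow_neg_one Y h₀, trace_mpow_neg_one Y h₁]
  exact trace_inv_strict hY h₀ h₁ hne hs0 hs1

end TPAux
end TPAuxSection

/-- For positive definite `Y` and `p ∈ [1,2)`, the map `ω ↦ Tr(Y ω^{1-2/p})` is strictly
convex on positive definite density matrices. -/
theorem trace_pow_strictConvex {n : ℕ} (Y : Matrix (Fin n) (Fin n) ℂ) (hY : Y.PosDef)
    (p : ℝ) (hp1 : 1 ≤ p) (hp2 : p < 2)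
    (ω₀ ω₁ : Matrix (Fin n) (Fin n) ℂ) (h₀ : ω₀.PosDef) (h₁ : ω₁.PosDef)
    (ht₀ : ω₀.trace = 1) (ht₁ : ω₁.trace = 1) (hne : ω₀ ≠ ω₁)
    (t : ℝ) (ht : t ∈ Set.Ioo (0:ℝ) 1) :
    ((Y * mpow ((1 - t) • ω₀ + t • ω₁) (1 - 2/p)).trace).re <
      (1 - t) * ((Y * mpow ω₀ (1 - 2/p)).trace).re +
        t * ((Y * mpow ω₁ (1 - 2/p)).trace).re := by
  obtain ⟨ht0, ht1⟩ := ht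
  have hp0 : (0:ℝ) < p := lt_of_lt_of_le one_pos hp1
  have hq0 : 1 - 2/p < 0 := by
    have : 1 < 2/p := (one_lt_div hp0).mpr hp2
    linarith
  have hqge : -1 ≤ 1 - 2/p := by
    have : 2/p ≤ 2 := by
      rw [div_le_iff₀ hp0]
      linarith
    linarith
  rcases eq_or_lt_of_le hqge with h | h
  · rw [← h]
    exact TPAux.main_lt_neg_one hY h₀ h₁ hne ht0 ht1
  · exact TPAux.main_lt hY h hq0 h₀ h₁ hne ht0 ht1
end

section
/- Let Y be a positive definite n×n matrix and p ∈ (2,∞). Then the function ω ↦ Tr(Y ω^{1−2/p}) on the set of positive definite density matrices is strictly concave. -/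
open Matrix ComplexOrder

namespace TracePowAux

open MeasureTheory Set

variable {n : ℕ}

/-! ### Trace/quadratic form lemmas -/

lemma trace_mul_diag_conj (Y U : Matrix (Fin n) (Fin n) ℂ) (f : Fin n → ℝ) :
    ((Y * (U * Matrix.diagonal (fun i => ((f i : ℝ) : ℂ)) * star U)).trace).re
      = ∑ i, f i * ((star U * Y * U) i i).re := by
  have h1 : Y * (U * Matrix.diagonal (fun i => ((f i : ℝ) : ℂ)) * star U)
      = (Y * U * Matrix.diagonal (fun i => ((f i : ℝ) : ℂ))) * star U := by
    simp only [Matrix.mul_assoc]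
  rw [h1, Matrix.trace_mul_comm, ← Matrix.mul_assoc, ← Matrix.mul_assoc]
  rw [Matrix.trace]
  simp only [Matrix.diag_apply, Matrix.mul_diagonal, Complex.re_sum]
  refine Finset.sum_congr rfl fun i _ => ?_
  simp [mul_comm]

lemma quad_eq_entry (Y U : Matrix (Fin n) (Fin n) ℂ) (i : Fin n) :
    (star U * Y * U) i i = dotProduct (star (fun j => U j i)) (Y *ᵥ (fun j => U j i)) := by
  simp only [Matrix.mul_apply, Matrix.mulVec, dotProduct, Matrix.star_apply,
    Pi.star_apply, Matrix.conjTranspose_apply, Finset.sum_mul, Finset.mul_sum]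
  rw [Finset.sum_comm]
  refine Finset.sum_congr rfl fun j _ => Finset.sum_congr rfl fun k _ => ?_
  ring

lemma col_ne_zero {U : Matrix (Fin n) (Fin n) ℂ} (hU : star U * U = 1) (i : Fin n) :
    (fun j => U j i) ≠ 0 := by
  intro h
  have h1 : (star U * U) i i = 1 := by rw [hU]; simp
  rw [Matrix.mul_apply] at h1
  have : ∀ j, (star U) i j * U j i = 0 := by
    intro j
    have : U j i = 0 := congrFun h j
    simp [this]
  simp only [this, Finset.sum_const_zero] at h1
  exact zero_ne_one h1

lemma diag_entry_pos {Y : Matrix (Fin n) (Fin n) ℂ} (hY : Y.PosDef)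
    {U : Matrix (Fin n) (Fin n) ℂ} (hU : star U * U = 1) (i : Fin n) :
    0 < ((star U * Y * U) i i).re := by
  rw [quad_eq_entry]
  have := hY.dotProduct_mulVec_pos (col_ne_zero hU i)
  exact (Complex.lt_def.mp this).1

/-! ### Conjugation by the eigenvector unitary -/

noncomputable def conjU (U : Matrix (Fin n) (Fin n) ℂ) (f : Fin n → ℂ) : Matrix (Fin n) (Fin n) ℂ :=
  U * Matrix.diagonal f * star U

lemma conjU_mul {U : Matrix (Fin n) (Fin n) ℂ} (hU : star U * U = 1) (f g : Fin n → ℂ) :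
    conjU U f * conjU U g = conjU U (f * g) := by
  unfold conjU
  have : U * Matrix.diagonal f * star U * (U * Matrix.diagonal g * star U)
      = U * (Matrix.diagonal f * (star U * U) * Matrix.diagonal g) * star U := by
    simp only [Matrix.mul_assoc]
  rw [this, hU, Matrix.mul_one, Matrix.diagonal_mul_diagonal]
  rfl

lemma conjU_one {U : Matrix (Fin n) (Fin n) ℂ} (hU' : U * star U = 1) :
    conjU U (fun _ => 1) = 1 := by
  unfold conjU
  rw [show (Matrix.diagonal fun _ => (1:ℂ)) = 1 from Matrix.diagonal_one, Matrix.mul_one, hU']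

lemma conjU_add (U : Matrix (Fin n) (Fin n) ℂ) (f g : Fin n → ℂ) :
    conjU U f + conjU U g = conjU U (f + g) := by
  unfold conjU
  rw [show Matrix.diagonal (f+g) = Matrix.diagonal f + Matrix.diagonal g from
    (Matrix.diagonal_add f g).symm, Matrix.mul_add, Matrix.add_mul]

lemma conjU_smul (U : Matrix (Fin n) (Fin n) ℂ) (c : ℂ) (f : Fin n → ℂ) :
    c • conjU U f = conjU U (c • f) := by
  unfold conjU
  rw [Matrix.diagonal_smul, Matrix.mul_smul, Matrix.smul_mul]

section Spec

variable {A : Matrix (Fin n) (Fin n) ℂ} (hA : A.PosDef)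

lemma unit1 : star (hA.1.eigenvectorUnitary : Matrix (Fin n) (Fin n) ℂ) * hA.1.eigenvectorUnitary = 1 :=
  Unitary.coe_star_mul_self hA.1.eigenvectorUnitary

lemma unit2 : (hA.1.eigenvectorUnitary : Matrix (Fin n) (Fin n) ℂ) * star (hA.1.eigenvectorUnitary : Matrix (Fin n) (Fin n) ℂ) = 1 :=
  Unitary.coe_mul_star_self hA.1.eigenvectorUnitary

lemma spec_eq : A = conjU (hA.1.eigenvectorUnitary : Matrix (Fin n) (Fin n) ℂ)
    (fun i => ((hA.1.eigenvalues i : ℝ) : ℂ)) := by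
  conv_lhs => rw [hA.1.spectral_theorem]
  rfl

lemma mpow_eq (r : ℝ) : mpow A r = conjU (hA.1.eigenvectorUnitary : Matrix (Fin n) (Fin n) ℂ)
    (fun i => ((hA.1.eigenvalues i ^ r : ℝ) : ℂ)) := by
  unfold mpow conjU
  rw [dif_pos hA.1]

lemma shift_eq (l : ℝ) : A + (l : ℂ) • 1 = conjU (hA.1.eigenvectorUnitary : Matrix (Fin n) (Fin n) ℂ)
    (fun i => ((hA.1.eigenvalues i + l : ℝ) : ℂ)) := by
  have h1 : (l:ℂ) • (1 : Matrix (Fin n) (Fin n) ℂ)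
      = conjU (hA.1.eigenvectorUnitary : Matrix (Fin n) (Fin n) ℂ) (fun _ => (l:ℂ)) := by
    rw [show (fun _ => (l:ℂ)) = (l:ℂ) • (fun (_ : Fin n) => (1:ℂ)) by ext; simp,
      ← conjU_smul, conjU_one (unit2 hA)]
  conv_lhs => rw [spec_eq hA, h1]
  rw [conjU_add]
  have : ((fun i => ((hA.1.eigenvalues i :ℝ):ℂ)) + fun _ => (l:ℂ))
      = fun i => ((hA.1.eigenvalues i + l : ℝ) : ℂ) := by
    funext i; simp
  rw [this]

/-- explicit resolvent -/
noncomputable def resol (hA : A.PosDef) (l : ℝ) : Matrix (Fin n) (Fin n) ℂ :=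
  conjU (hA.1.eigenvectorUnitary : Matrix (Fin n) (Fin n) ℂ)
    (fun i => ((1 / (hA.1.eigenvalues i + l) : ℝ) : ℂ))

lemma shift_mul_resol {l : ℝ} (hl : 0 < l) : (A + (l : ℂ) • 1) * resol hA l = 1 := by
  rw [shift_eq hA, resol, conjU_mul (unit1 hA)]
  rw [show ((fun i => ((hA.1.eigenvalues i + l : ℝ) : ℂ)) * fun i => ((1 / (hA.1.eigenvalues i + l) : ℝ) : ℂ)) = fun _ => (1:ℂ) from ?_, conjU_one (unit2 hA)]
  ext i
  have hpos : 0 < hA.1.eigenvalues i + l := add_pos (hA.eigenvalues_pos i) hl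
  simp only [Pi.mul_apply, ← Complex.ofReal_mul]
  rw [mul_one_div, div_self hpos.ne']
  simp

lemma resol_eq_inv {l : ℝ} (hl : 0 < l) : (A + (l : ℂ) • 1)⁻¹ = resol hA l :=
  Matrix.inv_eq_right_inv (shift_mul_resol hA hl)

lemma mul_resol_eq {l : ℝ} (hl : 0 < l) :
    A * resol hA l = 1 - (l:ℂ) • resol hA l := by
  have := shift_mul_resol hA hl
  rw [Matrix.add_mul, Matrix.smul_mul, Matrix.one_mul] at this
  rw [← this]; abel

end Spec

/-! ### Strict operator convexity of the inverse -/

lemma q_identity {A : Matrix (Fin n) (Fin n) ℂ} (hA : A.PosDef) (u v : Fin n → ℂ) :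
    dotProduct (star (A *ᵥ u - v)) (A⁻¹ *ᵥ (A *ᵥ u - v))
      = dotProduct (star u) (A *ᵥ u) - dotProduct (star u) v - dotProduct (star v) u
        + dotProduct (star v) (A⁻¹ *ᵥ v) := by
  have hd : IsUnit A.det := hA.det_pos.ne'.isUnit
  have h1 : A⁻¹ *ᵥ (A *ᵥ u - v) = u - A⁻¹ *ᵥ v := by
    rw [Matrix.mulVec_sub, Matrix.mulVec_mulVec, Matrix.nonsing_inv_mul A hd, Matrix.one_mulVec]
  have h2 : star (A *ᵥ u - v) = star u ᵥ* A - star v := by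
    rw [star_sub, Matrix.star_mulVec, hA.1]
  rw [h1, h2, sub_dotProduct, dotProduct_sub, dotProduct_sub]
  rw [← Matrix.dotProduct_mulVec, ← Matrix.dotProduct_mulVec, Matrix.mulVec_mulVec,
    Matrix.mul_nonsing_inv A hd, Matrix.one_mulVec]
  ring

lemma smul_posDef {M : Matrix (Fin n) (Fin n) ℂ} (hM : M.PosDef) {r : ℝ} (hr : 0 < r) :
    ((r:ℂ) • M).PosDef := by
  refine Matrix.PosDef.of_dotProduct_mulVec_pos ?_ ?_
  · unfold Matrix.IsHermitian
    rw [Matrix.conjTranspose_smul, hM.1]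
    congr 1
    simp
  · intro x hx
    rw [Matrix.smul_mulVec, dotProduct_smul, smul_eq_mul]
    have h0 : (0:ℂ) < (r:ℂ) := by exact_mod_cast hr
    exact mul_pos h0 (hM.dotProduct_mulVec_pos hx)

lemma qform_zero_iff {M : Matrix (Fin n) (Fin n) ℂ} (hM : M.PosDef) (x : Fin n → ℂ)
    (h : dotProduct (star x) (M *ᵥ x) = 0) : x = 0 := by
  by_contra hx
  exact absurd (hM.dotProduct_mulVec_pos hx) (by rw [h]; exact lt_irrefl 0)

lemma inv_convex {A B : Matrix (Fin n) (Fin n) ℂ} (hA : A.PosDef) (hB : B.PosDef)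
    {t : ℝ} (ht0 : 0 < t) (ht1 : t < 1) (hAB : A ≠ B) :
    (((1-t:ℝ):ℂ) • A⁻¹ + ((t:ℝ):ℂ) • B⁻¹
        - ((((1-t:ℝ):ℂ) • A + ((t:ℝ):ℂ) • B))⁻¹).PosSemidef ∧
      (((1-t:ℝ):ℂ) • A⁻¹ + ((t:ℝ):ℂ) • B⁻¹
        - ((((1-t:ℝ):ℂ) • A + ((t:ℝ):ℂ) • B))⁻¹) ≠ 0 := by
  set C : Matrix (Fin n) (Fin n) ℂ := ((1-t:ℝ):ℂ) • A + ((t:ℝ):ℂ) • B with hCdef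
  have hC : C.PosDef := (smul_posDef hA (by linarith)).add (smul_posDef hB ht0)
  set D : Matrix (Fin n) (Fin n) ℂ := ((1-t:ℝ):ℂ) • A⁻¹ + ((t:ℝ):ℂ) • B⁻¹ - C⁻¹ with hDdef
  have hdA : IsUnit A.det := hA.det_pos.ne'.isUnit
  have hdB : IsUnit B.det := hB.det_pos.ne'.isUnit
  have hdC : IsUnit C.det := hC.det_pos.ne'.isUnit
  have key : ∀ v : Fin n → ℂ,
      dotProduct (star v) (D *ᵥ v)
        = ((1-t:ℝ):ℂ) * dotProduct (star (A *ᵥ (C⁻¹ *ᵥ v) - v)) (A⁻¹ *ᵥ (A *ᵥ (C⁻¹ *ᵥ v) - v))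
          + ((t:ℝ):ℂ) * dotProduct (star (B *ᵥ (C⁻¹ *ᵥ v) - v)) (B⁻¹ *ᵥ (B *ᵥ (C⁻¹ *ᵥ v) - v)) := by
    intro v
    set u : Fin n → ℂ := C⁻¹ *ᵥ v with hu
    rw [q_identity hA, q_identity hB]
    have hCu : C *ᵥ u = v := by
      rw [hu, Matrix.mulVec_mulVec, Matrix.mul_nonsing_inv C hdC, Matrix.one_mulVec]
    have hCq : dotProduct (star u) v = dotProduct (star v) (C⁻¹ *ᵥ v) := by
      rw [hu, Matrix.star_mulVec, hC.inv.1, ← Matrix.dotProduct_mulVec]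
    have hCuq : ((1-t:ℝ):ℂ) * dotProduct (star u) (A *ᵥ u)
        + ((t:ℝ):ℂ) * dotProduct (star u) (B *ᵥ u) = dotProduct (star u) v := by
      rw [← hCu]
      rw [hCdef, Matrix.add_mulVec, Matrix.smul_mulVec, Matrix.smul_mulVec,
        dotProduct_add, dotProduct_smul, dotProduct_smul]
      simp [smul_eq_mul]
    rw [hDdef]
    rw [Matrix.sub_mulVec, Matrix.add_mulVec, Matrix.smul_mulVec, Matrix.smul_mulVec,
      dotProduct_sub, dotProduct_add, dotProduct_smul, dotProduct_smul]
    simp only [smul_eq_mul]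
    rw [← hCq]
    have hone : ((1-t:ℝ):ℂ) + ((t:ℝ):ℂ) = 1 := by push_cast; ring
    linear_combination -hCuq + 2*(dotProduct (star u) v)*hone
  have hs0 : (0:ℝ) < 1 - t := by linarith
  have hqA : ∀ x, (0:ℂ) ≤ dotProduct (star x) (A⁻¹ *ᵥ x) := fun x => hA.inv.posSemidef.dotProduct_mulVec_nonneg x
  have hqB : ∀ x, (0:ℂ) ≤ dotProduct (star x) (B⁻¹ *ᵥ x) := fun x => hB.inv.posSemidef.dotProduct_mulVec_nonneg x
  have hherm : D.IsHermitian := by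
    have hE : (((1-t:ℝ):ℂ) • A⁻¹ + ((t:ℝ):ℂ) • B⁻¹).PosDef :=
      (smul_posDef hA.inv hs0).add (smul_posDef hB.inv ht0)
    exact hE.1.sub hC.inv.1
  have hpsd : D.PosSemidef := by
    refine Matrix.PosSemidef.of_dotProduct_mulVec_nonneg hherm fun x => ?_
    rw [key x]
    have c1 : (0:ℂ) ≤ ((1-t:ℝ):ℂ) := by exact_mod_cast hs0.le
    have c2 : (0:ℂ) ≤ ((t:ℝ):ℂ) := by exact_mod_cast ht0.le
    exact add_nonneg (mul_nonneg c1 (hqA _)) (mul_nonneg c2 (hqB _))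
  refine ⟨hpsd, fun h0 => hAB ?_⟩
  have hzero : ∀ v : Fin n → ℂ, A *ᵥ (C⁻¹ *ᵥ v) - v = 0 ∧ B *ᵥ (C⁻¹ *ᵥ v) - v = 0 := by
    intro v
    have hk := key v
    rw [h0] at hk
    simp only [Matrix.zero_mulVec, dotProduct_zero] at hk
    set a : ℂ := dotProduct (star (A *ᵥ (C⁻¹ *ᵥ v) - v)) (A⁻¹ *ᵥ (A *ᵥ (C⁻¹ *ᵥ v) - v)) with ha
    set b : ℂ := dotProduct (star (B *ᵥ (C⁻¹ *ᵥ v) - v)) (B⁻¹ *ᵥ (B *ᵥ (C⁻¹ *ᵥ v) - v)) with hb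
    have ha0 : (0:ℂ) ≤ a := hqA _
    have hb0 : (0:ℂ) ≤ b := hqB _
    rw [Complex.nonneg_iff] at ha0 hb0
    have hre : 0 = (1-t) * a.re + t * b.re := by
      have := congrArg Complex.re hk
      simpa [Complex.add_re, Complex.re_ofReal_mul] using this
    have hare : a.re = 0 := by nlinarith [mul_nonneg hs0.le ha0.1, mul_nonneg ht0.le hb0.1]
    have hbre : b.re = 0 := by nlinarith [mul_nonneg hs0.le ha0.1, mul_nonneg ht0.le hb0.1]
    have haz : a = 0 := Complex.ext hare ha0.2.symm
    have hbz : b = 0 := Complex.ext hbre hb0.2.symm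
    exact ⟨qform_zero_iff hA.inv _ haz, qform_zero_iff hB.inv _ hbz⟩
  have hM : (A - B) * C⁻¹ = 0 := by
    ext i j
    have hv := hzero (Pi.single j 1)
    have h1 : ((A - B) * C⁻¹) *ᵥ Pi.single j 1 = 0 := by
      rw [← Matrix.mulVec_mulVec, Matrix.sub_mulVec]
      rw [sub_eq_zero.mp hv.1, sub_eq_zero.mp hv.2]
      simp
    have h2 : ((A - B) * C⁻¹) *ᵥ Pi.single j 1 = fun i => ((A - B) * C⁻¹) i j := by
      simp [Matrix.mulVec_single]
      rfl
    rw [h2] at h1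
    exact congrFun h1 i
  have : A - B = 0 := by
    have := congrArg (· * C) hM
    simpa [Matrix.mul_assoc, Matrix.nonsing_inv_mul C hdC] using this
  exact sub_eq_zero.mp this

/-! ### positivity of Re Tr(Y D) -/

lemma retrace_pos {Y D : Matrix (Fin n) (Fin n) ℂ} (hY : Y.PosDef)
    (hD : D.PosSemidef) (hD0 : D ≠ 0) : 0 < ((Y * D).trace).re := by
  set U : Matrix (Fin n) (Fin n) ℂ := (hD.1.eigenvectorUnitary : Matrix (Fin n) (Fin n) ℂ) with hU
  set e : Fin n → ℝ := hD.1.eigenvalues with he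
  have hspec : D = U * Matrix.diagonal (fun i => ((e i : ℝ) : ℂ)) * star U := by
    conv_lhs => rw [hD.1.spectral_theorem]
    rfl
  have hUu : star U * U = 1 := Unitary.coe_star_mul_self hD.1.eigenvectorUnitary
  have htr : ((Y * D).trace).re = ∑ i, e i * ((star U * Y * U) i i).re := by
    conv_lhs => rw [hspec]
    exact trace_mul_diag_conj Y U e
  rw [htr]
  have hex : ∃ i, e i ≠ 0 := by
    by_contra hno
    push_neg at hno
    apply hD0
    rw [hspec]
    have : (fun i => ((e i : ℝ) : ℂ)) = fun _ => (0:ℂ) := by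
      funext i; rw [hno i]; simp
    rw [this]
    simp [Matrix.diagonal_zero]
  obtain ⟨i0, hi0⟩ := hex
  refine Finset.sum_pos' (fun i _ => mul_nonneg (hD.eigenvalues_nonneg i)
    (diag_entry_pos hY hUu i).le) ⟨i0, Finset.mem_univ _, ?_⟩
  exact mul_pos (lt_of_le_of_ne (hD.eigenvalues_nonneg i0) (Ne.symm hi0)) (diag_entry_pos hY hUu i0)

/-! ### scalar integral representation of x^a -/

section Kernel
variable {a : ℝ} (ha0 : 0 < a) (ha1 : a < 1)

noncomputable def gker (a : ℝ) (u : ℝ) : ℝ := u ^ (a-1) * (1/(1+u))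

lemma gker_meas : Measurable (gker a) := by
  unfold gker
  fun_prop

include ha0 ha1 in
lemma gker_integrable : IntegrableOn (gker a) (Ioi (0:ℝ)) := by
  have hsplit : Ioi (0:ℝ) = Ioc (0:ℝ) 1 ∪ Ioi (1:ℝ) := (Ioc_union_Ioi_eq_Ioi zero_le_one).symm
  rw [hsplit]
  apply IntegrableOn.union
  · have hrint : IntegrableOn (fun u : ℝ => u ^ (a-1)) (Ioc (0:ℝ) 1) := by
      have := intervalIntegral.intervalIntegrable_rpow' (a := (0:ℝ)) (b := 1) (r := a-1) (by linarith)
      rwa [intervalIntegrable_iff_integrableOn_Ioc_of_le zero_le_one] at this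
    refine Integrable.mono' hrint (gker_meas.aestronglyMeasurable.restrict) ?_
    filter_upwards [ae_restrict_mem measurableSet_Ioc] with u hu
    have hu0 : 0 < u := hu.1
    rw [Real.norm_eq_abs, abs_of_nonneg]
    · unfold gker
      have h1 : 1/(1+u) ≤ 1 := by
        rw [div_le_one (by linarith)]; linarith
      calc u ^ (a-1) * (1/(1+u)) ≤ u ^ (a-1) * 1 := by
            apply mul_le_mul_of_nonneg_left h1 (Real.rpow_nonneg hu0.le _)
        _ = u ^ (a-1) := mul_one _
    · exact mul_nonneg (Real.rpow_nonneg hu0.le _) (by positivity)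
  · have hrint : IntegrableOn (fun u : ℝ => u ^ (a-2)) (Ioi (1:ℝ)) :=
      integrableOn_Ioi_rpow_of_lt (by linarith) one_pos
    refine Integrable.mono' hrint (gker_meas.aestronglyMeasurable.restrict) ?_
    filter_upwards [ae_restrict_mem measurableSet_Ioi] with u hu
    have hu1 : (1:ℝ) < u := hu
    have hu0 : 0 < u := lt_trans one_pos hu1
    rw [Real.norm_eq_abs, abs_of_nonneg]
    · unfold gker
      have h1 : 1/(1+u) ≤ 1/u := by
        apply one_div_le_one_div_of_le hu0; linarith
      calc u ^ (a-1) * (1/(1+u)) ≤ u ^ (a-1) * (1/u) := by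
            apply mul_le_mul_of_nonneg_left h1 (Real.rpow_nonneg hu0.le _)
        _ = u ^ (a-2) := by
            rw [one_div, ← Real.rpow_neg_one u, ← Real.rpow_add hu0]
            ring_nf
    · exact mul_nonneg (Real.rpow_nonneg hu0.le _) (by positivity)

lemma gker_pos {u : ℝ} (hu : 0 < u) : 0 < gker a u := by
  unfold gker
  have := Real.rpow_pos_of_pos hu (a-1)
  positivity

noncomputable def Kconst (a : ℝ) : ℝ := ∫ u in Ioi (0:ℝ), gker a u

include ha0 ha1 in
lemma Kconst_pos : 0 < Kconst a := by
  rw [Kconst]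
  rw [MeasureTheory.setIntegral_pos_iff_support_of_nonneg_ae]
  · have hsub : Ioi (0:ℝ) ⊆ Function.support (gker a) := fun u hu => (gker_pos hu).ne'
    calc (0:ENNReal) < volume (Ioi (0:ℝ)) := by simp [Real.volume_Ioi]
      _ ≤ volume (Function.support (gker a) ∩ Ioi 0) := by
          rw [Set.inter_eq_right.mpr hsub]
  · filter_upwards [ae_restrict_mem measurableSet_Ioi] with u hu
    exact (gker_pos hu).le
  · exact gker_integrable ha0 ha1

/-- the kernel for parameter x -/
noncomputable def fker (a x : ℝ) (l : ℝ) : ℝ := l ^ (a-1) * (x/(x+l))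

lemma fker_eq {x : ℝ} (hx : 0 < x) {l : ℝ} (hl : 0 < l) :
    fker a x l = x ^ (a-1) * gker a (x⁻¹ * l) := by
  unfold fker gker
  have h1 : (x⁻¹ * l) ^ (a-1) = x⁻¹ ^ (a-1) * l ^ (a-1) :=
    Real.mul_rpow (by positivity) hl.le
  rw [h1]
  have h2 : 1/(1+x⁻¹*l) = x/(x+l) := by
    rw [div_eq_div_iff (by positivity) (by positivity)]
    field_simp
  rw [h2]
  have h3 : x ^ (a-1) * x⁻¹ ^ (a-1) = 1 := by
    rw [← Real.mul_rpow hx.le (by positivity), mul_inv_cancel₀ hx.ne']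
    exact Real.one_rpow _
  calc l ^ (a-1) * (x/(x+l)) = (x ^ (a-1) * x⁻¹ ^ (a-1)) * (l ^ (a-1) * (x/(x+l))) := by
        rw [h3, one_mul]
    _ = x ^ (a-1) * (x⁻¹ ^ (a-1) * l ^ (a-1) * (x/(x+l))) := by ring

include ha0 ha1 in
lemma fker_integrable {x : ℝ} (hx : 0 < x) : IntegrableOn (fker a x) (Ioi (0:ℝ)) := by
  have hg : IntegrableOn (fun l => x ^ (a-1) * gker a (x⁻¹ * l)) (Ioi (0:ℝ)) := by
    apply Integrable.const_mul
    have := (gker_integrable ha0 ha1 (a := a))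
    have hcomp : IntegrableOn (fun l => gker a (x⁻¹ * l)) (Ioi (0:ℝ)) := by
      have h := (integrableOn_Ioi_comp_mul_left_iff (gker a) (0:ℝ) (inv_pos.mpr hx)).mpr ?_
      · simpa [mul_zero] using h
      · simpa [mul_zero] using this
    exact hcomp
  apply hg.congr_fun
  · intro l hl
    exact (fker_eq hx hl).symm
  · exact measurableSet_Ioi

lemma fker_integral {x : ℝ} (hx : 0 < x) :
    ∫ l in Ioi (0:ℝ), fker a x l = x ^ a * Kconst a := by
  have h1 : ∫ l in Ioi (0:ℝ), fker a x l = ∫ l in Ioi (0:ℝ), x ^ (a-1) * gker a (x⁻¹ * l) := by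
    apply setIntegral_congr_fun measurableSet_Ioi
    intro l hl
    exact fker_eq hx hl
  rw [h1, MeasureTheory.integral_const_mul]
  rw [integral_comp_mul_left_Ioi (gker a) 0 (inv_pos.mpr hx), mul_zero]
  rw [smul_eq_mul, inv_inv]
  rw [← mul_assoc, ← Real.rpow_add_one hx.ne', sub_add_cancel]
  rfl

end Kernel

/-! ### the integral representation of the trace functional -/

lemma rep {a : ℝ} (ha0 : 0 < a) (ha1 : a < 1) (Y : Matrix (Fin n) (Fin n) ℂ)
    {A : Matrix (Fin n) (Fin n) ℂ} (hA : A.PosDef) :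
    IntegrableOn (fun l => l ^ (a-1) * ((Y * (A * resol hA l)).trace).re) (Ioi (0:ℝ)) ∧
    Kconst a * ((Y * mpow A a).trace).re
      = ∫ l in Ioi (0:ℝ), l ^ (a-1) * ((Y * (A * resol hA l)).trace).re := by
  set U : Matrix (Fin n) (Fin n) ℂ := (hA.1.eigenvectorUnitary : Matrix (Fin n) (Fin n) ℂ) with hUdef
  set d : Fin n → ℝ := hA.1.eigenvalues with hddef
  set c : Fin n → ℝ := fun i => ((star U * Y * U) i i).re with hcdef
  have hGG : ∀ l ∈ Ioi (0:ℝ), l ^ (a-1) * ((Y * (A * resol hA l)).trace).re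
      = ∑ i, c i * fker a (d i) l := by
    intro l hl
    have hprod : A * resol hA l = conjU U (fun i => ((d i * (1/(d i + l)) : ℝ) : ℂ)) := by
      have h0 : A * resol hA l
          = conjU U (fun i => ((d i : ℝ) : ℂ)) * conjU U (fun i => ((1/(d i + l) : ℝ) : ℂ)) := by
        congr 1
        exact spec_eq hA
      rw [h0, conjU_mul (unit1 hA)]
      have hfe : ((fun i => ((d i : ℝ) : ℂ)) * fun i => ((1/(d i + l) : ℝ) : ℂ))
          = fun i => ((d i * (1/(d i + l)) : ℝ) : ℂ) := by
        funext i
        simp only [Pi.mul_apply]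
        push_cast
        ring
      rw [hfe]
    have htr : ((Y * (A * resol hA l)).trace).re = ∑ i, (d i * (1/(d i + l))) * c i := by
      rw [hprod]
      exact trace_mul_diag_conj Y U _
    rw [htr, Finset.mul_sum]
    refine Finset.sum_congr rfl fun i _ => ?_
    unfold fker
    rw [mul_one_div]
    ring
  have hint : ∀ i : Fin n, IntegrableOn (fun l => c i * fker a (d i) l) (Ioi (0:ℝ)) :=
    fun i => (fker_integrable ha0 ha1 (hA.eigenvalues_pos i)).const_mul _
  have hintsum : IntegrableOn (fun l => ∑ i, c i * fker a (d i) l) (Ioi (0:ℝ)) := by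
    apply MeasureTheory.integrable_finset_sum
    intro i _
    exact hint i
  constructor
  · apply hintsum.congr_fun
    · intro l hl
      exact (hGG l hl).symm
    · exact measurableSet_Ioi
  · have htr2 : ((Y * mpow A a).trace).re = ∑ i, (d i ^ a) * c i := by
      rw [mpow_eq hA]
      exact trace_mul_diag_conj Y U _
    rw [htr2, Finset.mul_sum]
    have hterm : ∀ i : Fin n, Kconst a * (d i ^ a * c i)
        = ∫ l in Ioi (0:ℝ), c i * fker a (d i) l := by
      intro i
      rw [MeasureTheory.integral_const_mul, fker_integral (hA.eigenvalues_pos i)]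
      ring
    rw [Finset.sum_congr rfl (fun i _ => hterm i)]
    rw [← MeasureTheory.integral_finset_sum Finset.univ (fun i _ => hint i)]
    apply setIntegral_congr_fun measurableSet_Ioi
    intro l hl
    exact (hGG l hl).symm

lemma GG_eq {A : Matrix (Fin n) (Fin n) ℂ} (hA : A.PosDef) {l : ℝ} (hl : 0 < l)
    (Y : Matrix (Fin n) (Fin n) ℂ) :
    ((Y * (A * resol hA l)).trace).re
      = (Y.trace).re - l * ((Y * (A + (l:ℂ) • 1)⁻¹).trace).re := by
  rw [resol_eq_inv hA hl, mul_resol_eq hA hl, Matrix.mul_sub, Matrix.mul_one,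
    Matrix.mul_smul, Matrix.trace_sub, Matrix.trace_smul, Complex.sub_re]
  congr 1
  rw [smul_eq_mul, Complex.re_ofReal_mul]

end TracePowAux

open TracePowAux MeasureTheory Set in
/-- For positive definite `Y` and `p ∈ (2,∞)`, the map `ω ↦ Tr(Y ω^{1-2/p})` is strictly
concave on positive definite density matrices. -/
theorem trace_pow_strictConcave {n : ℕ} (Y : Matrix (Fin n) (Fin n) ℂ) (hY : Y.PosDef)
    (p : ℝ) (hp : 2 < p)
    (ω₀ ω₁ : Matrix (Fin n) (Fin n) ℂ) (h₀ : ω₀.PosDef) (h₁ : ω₁.PosDef)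
    (ht₀ : ω₀.trace = 1) (ht₁ : ω₁.trace = 1) (hne : ω₀ ≠ ω₁)
    (t : ℝ) (ht : t ∈ Set.Ioo (0:ℝ) 1) :
    (1 - t) * ((Y * mpow ω₀ (1 - 2/p)).trace).re +
        t * ((Y * mpow ω₁ (1 - 2/p)).trace).re <
      ((Y * mpow ((1 - t) • ω₀ + t • ω₁) (1 - 2/p)).trace).re := by
  obtain ⟨ht0, ht1⟩ := ht
  set a : ℝ := 1 - 2/p with hadef
  have hp0 : 0 < p := by linarith
  have ha0 : 0 < a := by
    rw [hadef]
    have : 2/p < 1 := (div_lt_one hp0).mpr hp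
    linarith
  have ha1 : a < 1 := by
    rw [hadef]
    have : 0 < 2/p := by positivity
    linarith
  have hs0 : (0:ℝ) < 1 - t := by linarith
  have hsm : (1 - t) • ω₀ + t • ω₁ = ((1-t:ℝ):ℂ) • ω₀ + ((t:ℝ):ℂ) • ω₁ := by
    ext i j
    simp [Matrix.add_apply, Matrix.smul_apply, Complex.real_smul]
  rw [hsm]
  set ωt : Matrix (Fin n) (Fin n) ℂ := ((1-t:ℝ):ℂ) • ω₀ + ((t:ℝ):ℂ) • ω₁ with hwt
  have hωt : ωt.PosDef := (smul_posDef h₀ hs0).add (smul_posDef h₁ ht0)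
  obtain ⟨hint0, hrep0⟩ := rep ha0 ha1 Y h₀
  obtain ⟨hint1, hrep1⟩ := rep ha0 ha1 Y h₁
  obtain ⟨hintt, hrept⟩ := rep ha0 ha1 Y hωt
  set H0 : ℝ → ℝ := fun l => l ^ (a-1) * ((Y * (ω₀ * resol h₀ l)).trace).re with hH0
  set H1 : ℝ → ℝ := fun l => l ^ (a-1) * ((Y * (ω₁ * resol h₁ l)).trace).re with hH1
  set Ht : ℝ → ℝ := fun l => l ^ (a-1) * ((Y * (ωt * resol hωt l)).trace).re with hHt
  set Δ : ℝ → ℝ := fun l => Ht l - ((1-t) * H0 l + t * H1 l) with hΔ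
  have hpoint : ∀ l ∈ Ioi (0:ℝ), 0 < Δ l := by
    intro l hl
    have hl0 : (0:ℝ) < l := hl
    have hA : (ω₀ + (l:ℂ) • 1).PosDef := h₀.add (smul_posDef Matrix.PosDef.one hl0)
    have hB : (ω₁ + (l:ℂ) • 1).PosDef := h₁.add (smul_posDef Matrix.PosDef.one hl0)
    have hABne : (ω₀ + (l:ℂ) • 1) ≠ (ω₁ + (l:ℂ) • 1) := fun h => hne (add_right_cancel h)
    have hone : ((1-t:ℝ):ℂ) + ((t:ℝ):ℂ) = 1 := by push_cast; ring
    have hCC : ((1-t:ℝ):ℂ) • (ω₀ + (l:ℂ) • 1) + ((t:ℝ):ℂ) • (ω₁ + (l:ℂ) • 1)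
        = ωt + (l:ℂ) • 1 := by
      rw [smul_add, smul_add]
      have h2 : ((1-t:ℝ):ℂ) • ω₀ + ((1-t:ℝ):ℂ) • ((l:ℂ) • (1 : Matrix (Fin n) (Fin n) ℂ))
            + (((t:ℝ):ℂ) • ω₁ + ((t:ℝ):ℂ) • ((l:ℂ) • (1 : Matrix (Fin n) (Fin n) ℂ)))
          = (((1-t:ℝ):ℂ) • ω₀ + ((t:ℝ):ℂ) • ω₁)
            + ((((1-t:ℝ):ℂ) + ((t:ℝ):ℂ)) • ((l:ℂ) • (1 : Matrix (Fin n) (Fin n) ℂ))) := by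
        rw [add_smul]
        abel
      rw [h2, hone, one_smul, hwt]
    obtain ⟨hpsd, hne0⟩ := inv_convex hA hB ht0 ht1 hABne
    rw [hCC] at hpsd hne0
    have hpos := retrace_pos hY hpsd hne0
    have hexp : ((Y * (((1-t:ℝ):ℂ) • (ω₀ + (l:ℂ) • 1)⁻¹ + ((t:ℝ):ℂ) • (ω₁ + (l:ℂ) • 1)⁻¹
          - (ωt + (l:ℂ) • 1)⁻¹)).trace).re
        = (1-t) * ((Y * (ω₀ + (l:ℂ) • 1)⁻¹).trace).re
          + t * ((Y * (ω₁ + (l:ℂ) • 1)⁻¹).trace).re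
          - ((Y * (ωt + (l:ℂ) • 1)⁻¹).trace).re := by
      rw [Matrix.mul_sub, Matrix.mul_add, Matrix.mul_smul, Matrix.mul_smul,
        Matrix.trace_sub, Matrix.trace_add, Matrix.trace_smul, Matrix.trace_smul,
        Complex.sub_re, Complex.add_re]
      simp [smul_eq_mul, Complex.re_ofReal_mul]
    rw [hexp] at hpos
    have g0 := GG_eq h₀ hl0 Y
    have g1 := GG_eq h₁ hl0 Y
    have gt' := GG_eq hωt hl0 Y
    have hP : 0 < l ^ (a-1) := Real.rpow_pos_of_pos hl0 _
    have hgoal : Δ l = Ht l - ((1-t) * H0 l + t * H1 l) := rfl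
    rw [hgoal, hHt, hH0, hH1]
    simp only []
    rw [g0, g1, gt']
    nlinarith [mul_pos hP (mul_pos hl0 hpos)]
  have hintΔ : IntegrableOn Δ (Ioi (0:ℝ)) :=
    hintt.sub ((hint0.const_mul (1-t)).add (hint1.const_mul t))
  have hΔpos : 0 < ∫ l in Ioi (0:ℝ), Δ l := by
    rw [MeasureTheory.setIntegral_pos_iff_support_of_nonneg_ae]
    · calc (0:ENNReal) < volume (Ioi (0:ℝ)) := by simp [Real.volume_Ioi]
        _ ≤ volume (Function.support Δ ∩ Ioi 0) :=
            measure_mono (fun l hl => ⟨(hpoint l hl).ne', hl⟩)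
    · filter_upwards [ae_restrict_mem measurableSet_Ioi] with l hl
      exact (hpoint l hl).le
    · exact hintΔ
  have hsplit : ∫ l in Ioi (0:ℝ), Δ l
      = (∫ l in Ioi (0:ℝ), Ht l)
        - ((1-t) * ∫ l in Ioi (0:ℝ), H0 l) - (t * ∫ l in Ioi (0:ℝ), H1 l) := by
    have hg0 : IntegrableOn (fun l => (1-t) * H0 l) (Ioi (0:ℝ)) := hint0.const_mul (1-t)
    have hg1 : IntegrableOn (fun l => t * H1 l) (Ioi (0:ℝ)) := hint1.const_mul t
    have hg : IntegrableOn (fun l => (1-t) * H0 l + t * H1 l) (Ioi (0:ℝ)) := hg0.add hg1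
    rw [show (∫ l in Ioi (0:ℝ), Δ l) = ∫ l in Ioi (0:ℝ), (Ht l - ((1-t) * H0 l + t * H1 l)) from rfl]
    rw [MeasureTheory.integral_sub hintt hg, MeasureTheory.integral_add hg0 hg1,
      MeasureTheory.integral_const_mul, MeasureTheory.integral_const_mul]
    ring
  rw [hsplit, ← hrept, ← hrep0, ← hrep1] at hΔpos
  have hK := Kconst_pos ha0 ha1
  nlinarith [hΔpos, hK]
end

section
/- Let ρ, σ be positive definite density matrices and p ∈ [1,2). Then the infimum over positive definite density matrices ω of Tr(ρ^{1/2} σ^{2/p−1} ρ^{1/2} ω^{1−2/p}) equals (Tr[(ρ^{1/2} σ^{2/p−1} ρ^{1/2})^{p/2}])^{2/p}, attained uniquely at ω_* = Y^{p/2}/Tr(Y^{p/2}) with Y = ρ^{1/2} σ^{2/p−1} ρ^{1/2}. -/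
open Matrix ComplexOrder

variable {m : Type*} [Fintype m] [DecidableEq m]

lemma herm_conj_diag {U : Matrix m m ℂ} (hU : U ∈ Matrix.unitaryGroup m ℂ) (d : m → ℝ) :
    (U * Matrix.diagonal (fun i => (d i : ℂ)) * star U).IsHermitian := by
  have hd : (Matrix.diagonal (fun i => (d i : ℂ))).IsHermitian :=
    Matrix.isHermitian_diagonal_of_self_adjoint _ (funext fun i => by
      simp [_root_.IsSelfAdjoint, Complex.conj_ofReal])
  simpa [Matrix.star_eq_conjTranspose, Matrix.conjTranspose_mul, Matrix.mul_assoc] using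
    (Matrix.isHermitian_mul_mul_conjTranspose U hd)

lemma trace_conj_diag {U : Matrix m m ℂ} (hU : U ∈ Matrix.unitaryGroup m ℂ) (c : m → ℂ) :
    (U * Matrix.diagonal c * star U).trace = ∑ i, c i := by
  rw [Matrix.trace_mul_cycle]
  have h1 : star U * U = 1 := Matrix.mem_unitaryGroup_iff'.mp hU
  rw [h1, Matrix.one_mul, Matrix.trace_diagonal]

lemma posDef_conj_diag {U : Matrix m m ℂ} (hU : U ∈ Matrix.unitaryGroup m ℂ) {d : m → ℝ}
    (hd : ∀ i, 0 < d i) :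
    (U * Matrix.diagonal (fun i => (d i : ℂ)) * star U).PosDef := by
  refine Matrix.PosDef.of_dotProduct_mulVec_pos (herm_conj_diag hU d) fun x hx => ?_
  have hdiag : (Matrix.diagonal (fun i => (d i : ℂ))).PosDef :=
    Matrix.PosDef.diagonal (fun i => Complex.zero_lt_real.mpr (hd i))
  have hz : star U *ᵥ x ≠ 0 := by
    intro h
    apply hx
    have : U *ᵥ (star U *ᵥ x) = x := by
      rw [Matrix.mulVec_mulVec, Matrix.mem_unitaryGroup_iff.mp hU, Matrix.one_mulVec]
    rw [← this, h, Matrix.mulVec_zero]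
  have := hdiag.dotProduct_mulVec_pos hz
  simpa [Matrix.star_mulVec, Matrix.dotProduct_mulVec, Matrix.vecMul_vecMul,
    Matrix.star_eq_conjTranspose, Matrix.mul_assoc, Matrix.mulVec_mulVec] using this


lemma mpow_eq_conj {U : Matrix m m ℂ} (hU : U ∈ Matrix.unitaryGroup m ℂ) (d : m → ℝ)
    {A : Matrix m m ℂ} (hA : A = U * Matrix.diagonal (fun i => (d i : ℂ)) * star U) (r : ℝ) :
    mpow A r = U * Matrix.diagonal (fun i => ((d i ^ r : ℝ) : ℂ)) * star U := by
  have hH : A.IsHermitian := hA ▸ herm_conj_diag hU d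
  rw [mpow, dif_pos hH]
  set UA : Matrix m m ℂ := (hH.eigenvectorUnitary : Matrix m m ℂ) with hUA
  have hUA1 : star UA * UA = 1 := Matrix.mem_unitaryGroup_iff'.mp hH.eigenvectorUnitary.2
  have hUA2 : UA * star UA = 1 := Matrix.mem_unitaryGroup_iff.mp hH.eigenvectorUnitary.2
  have hU1 : star U * U = 1 := Matrix.mem_unitaryGroup_iff'.mp hU
  have hU2 : U * star U = 1 := Matrix.mem_unitaryGroup_iff.mp hU
  have hspec : UA * Matrix.diagonal (fun i => (hH.eigenvalues i : ℂ)) * star UA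
      = U * Matrix.diagonal (fun i => (d i : ℂ)) * star U := by
    conv_rhs => rw [← hA]
    exact hH.spectral_theorem.symm
  have hcomm : Matrix.diagonal (fun i => (hH.eigenvalues i : ℂ)) * (star UA * U)
      = (star UA * U) * Matrix.diagonal (fun i => (d i : ℂ)) := by
    have h := congrArg (fun X => star UA * X * U) hspec
    simp only [← Matrix.mul_assoc] at h
    rw [hUA1, Matrix.one_mul] at h
    rw [Matrix.mul_assoc _ (star U) U, hU1, Matrix.mul_one] at h
    simpa [Matrix.mul_assoc] using h
  have hcomm' : Matrix.diagonal (fun i => ((hH.eigenvalues i ^ r : ℝ) : ℂ)) * (star UA * U)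
      = (star UA * U) * Matrix.diagonal (fun i => ((d i ^ r : ℝ) : ℂ)) := by
    ext i j
    have h1 := congrFun (congrFun hcomm i) j
    simp only [Matrix.diagonal_mul, Matrix.mul_diagonal] at h1 ⊢
    by_cases h : (star UA * U) i j = 0
    · simp [h]
    · rw [mul_comm _ ((d j : ℂ))] at h1
      have h2 : (hH.eigenvalues i : ℂ) = (d j : ℂ) := mul_right_cancel₀ h h1
      have h3 : hH.eigenvalues i = d j := by exact_mod_cast h2
      rw [h3, mul_comm]
  have hgoal := congrArg (fun X => UA * X * star U) hcomm'
  simp only [← Matrix.mul_assoc] at hgoal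
  rw [Matrix.mul_assoc _ U (star U), hU2, Matrix.mul_one] at hgoal
  rw [hUA2, Matrix.one_mul] at hgoal
  exact hgoal

lemma trace_pair {U V : Matrix m m ℂ} (hU : U ∈ Matrix.unitaryGroup m ℂ)
    (hV : V ∈ Matrix.unitaryGroup m ℂ) (a b : m → ℝ) :
    ((U * Matrix.diagonal (fun i => (a i : ℂ)) * star U)
      * (V * Matrix.diagonal (fun i => (b i : ℂ)) * star V)).trace
    = ((∑ i, ∑ j, a i * b j * Complex.normSq ((star U * V) i j) : ℝ) : ℂ) := by
  have hU1 : star U * U = 1 := Matrix.mem_unitaryGroup_iff'.mp hU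
  have key : (U * Matrix.diagonal (fun i => (a i : ℂ)) * star U)
      * (V * Matrix.diagonal (fun i => (b i : ℂ)) * star V)
      = U * (Matrix.diagonal (fun i => (a i : ℂ)) * (star U * V)
          * Matrix.diagonal (fun i => (b i : ℂ)) * star (star U * V)) * star U := by
    simp only [Matrix.star_mul, star_star, ← Matrix.mul_assoc]
    rw [Matrix.mul_assoc _ U (star U), Matrix.mem_unitaryGroup_iff.mp hU, Matrix.mul_one]
  rw [key, Matrix.trace_mul_cycle, ← Matrix.mul_assoc, hU1, Matrix.one_mul]
  rw [Matrix.trace]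
  push_cast
  rw [Finset.sum_congr rfl]
  intro i _
  rw [Matrix.diag]
  set M := star U * V with hM
  have e1 : Matrix.diagonal (fun i => (a i : ℂ)) * M * Matrix.diagonal (fun i => (b i : ℂ))
      = Matrix.of (fun i j => (a i : ℂ) * M i j * (b j : ℂ)) := by
    ext i' j'
    simp [Matrix.diagonal_mul, Matrix.mul_diagonal]
  have : (Matrix.diagonal (fun i => (a i : ℂ)) * M * Matrix.diagonal (fun i => (b i : ℂ))
      * star M) i i = (a i : ℂ) * ∑ j, (b j : ℂ) * (M i j * star (M i j)) := by
    rw [e1, Matrix.mul_apply, Finset.mul_sum]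
    refine Finset.sum_congr rfl (fun j _ => ?_)
    simp only [Matrix.of_apply, Matrix.star_apply]
    ring
  rw [this]
  rw [Finset.mul_sum]
  push_cast
  refine Finset.sum_congr rfl (fun j _ => ?_)
  rw [show star (M i j) = (starRingEnd ℂ) (M i j) from rfl, Complex.mul_conj]
  push_cast
  ring

lemma strictConvexOn_rpow_neg {t : ℝ} (ht : 0 < t) :
    StrictConvexOn ℝ (Set.Ioi 0) fun x : ℝ => x ^ (-t) := by
  apply strictConvexOn_of_deriv2_pos' (convex_Ioi 0)
  · intro x hx
    exact (Real.continuousAt_rpow_const x _ (Or.inl (ne_of_gt hx))).continuousWithinAt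
  · intro x hx
    have hx' : (0:ℝ) < x := hx
    have h1 : deriv (deriv fun z : ℝ => z ^ (-t)) x
        = deriv (fun y : ℝ => (-t) * y ^ (-t - 1)) x := by
      apply Filter.EventuallyEq.deriv_eq
      filter_upwards [isOpen_Ioi.mem_nhds hx] with y hy
      exact (Real.hasDerivAt_rpow_const (Or.inl (ne_of_gt hy))).deriv
    have h2 : deriv (fun y : ℝ => (-t) * y ^ (-t - 1)) x
        = (-t) * ((-t - 1) * x ^ (-t - 1 - 1)) :=
      (((Real.hasDerivAt_rpow_const (p := -t - 1) (Or.inl (ne_of_gt hx'))).const_mul (-t))).deriv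
    simp only [Function.iterate_succ, Function.iterate_zero, Function.comp_apply, Function.comp, id_eq]
    rw [h1, h2, show (-t) * ((-t - 1) * x ^ (-t - 1 - 1)) = t * (t+1) * x ^ (-t-1-1) by ring]
    have hxp : 0 < x ^ (-t - 1 - 1) := Real.rpow_pos_of_pos hx' _
    positivity

lemma jensen_rpow_neg {ι : Type*} [Fintype ι] {t : ℝ} (ht : 0 < t) (a w : ι → ℝ)
    (ha : ∀ j, 0 ≤ a j) (hw : ∀ j, 0 < w j) (ha1 : ∑ j, a j = 1) :
    (∑ j, a j * w j) ^ (-t) ≤ ∑ j, a j * w j ^ (-t) ∧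
    ((∑ j, a j * w j ^ (-t)) ≤ (∑ j, a j * w j) ^ (-t) →
      ∀ j, 0 < a j → w j = ∑ k, a k * w k) := by
  classical
  set s : Finset ι := Finset.univ.filter (fun j => 0 < a j) with hs
  have hzero : ∀ j ∈ Finset.univ, j ∉ s → ∀ g : ι → ℝ, a j * g j = 0 := by
    intro j _ hj g
    have : ¬ (0 < a j) := by simpa [hs] using hj
    have : a j = 0 := le_antisymm (not_lt.1 this) (ha j)
    simp [this]
  have hsum : ∀ g : ι → ℝ, ∑ j ∈ s, a j * g j = ∑ j, a j * g j := by
    intro g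
    exact Finset.sum_subset (Finset.subset_univ s) (fun j h1 h2 => hzero j h1 h2 g)
  have hsum1 : ∑ j ∈ s, a j = 1 := by
    rw [← ha1]
    exact Finset.sum_subset (Finset.subset_univ s) (fun j h1 h2 => by
      simpa using hzero j h1 h2 (fun _ => 1))
  have hpos : ∀ j ∈ s, 0 < a j := fun j hj => by simpa [hs] using hj
  have hmem : ∀ j ∈ s, w j ∈ Set.Ioi (0:ℝ) := fun j _ => hw j
  have hle := (strictConvexOn_rpow_neg ht).convexOn.map_sum_le
    (t := s) (w := a) (p := w) (fun j hj => (hpos j hj).le) hsum1 hmem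
  simp only [smul_eq_mul] at hle
  rw [hsum, hsum] at hle
  refine ⟨hle, ?_⟩
  intro heq j hj
  have hj' : j ∈ s := by simp [hs, hj]
  have heq' : ∑ i ∈ s, a i * w i ^ (-t) ≤ (∑ i ∈ s, a i * w i) ^ (-t) := by
    rw [hsum, hsum]; exact heq
  have hconst := (strictConvexOn_rpow_neg ht).eq_of_le_map_sum
    (t := s) (w := a) (p := w) hpos hsum1 hmem (by simpa only [smul_eq_mul] using heq')
  have : ∑ k, a k * w k = ∑ k ∈ s, a k * w j := by
    rw [← hsum]
    exact Finset.sum_congr rfl (fun k hk => by rw [hconst hk hj'])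
  rw [this, ← Finset.sum_mul, hsum1, one_mul]

lemma rpow_cancel {a q t : ℝ} (ha : 0 < a) (hq : q * (1 + t) = 1) :
    (a ^ q) ^ t = a / a ^ q := by
  have h2 : a ^ q * (a ^ q) ^ t = a := by
    rw [← Real.rpow_mul ha.le q t, ← Real.rpow_add ha,
      show q + q * t = 1 by nlinarith [hq], Real.rpow_one]
  have hB : (0:ℝ) < a ^ q := Real.rpow_pos_of_pos ha q
  rw [eq_div_iff hB.ne']
  linarith [h2]

lemma rpow_aux {a S q t : ℝ} (ha : 0 < a) (hS : 0 < S) (hq : q * (1 + t) = 1) :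
    a * (a ^ q / S) ^ (-t) = a ^ q * S ^ t := by
  have hB : (0:ℝ) < a ^ q := Real.rpow_pos_of_pos ha q
  have hSt : (0:ℝ) < S ^ t := Real.rpow_pos_of_pos hS t
  rw [Real.div_rpow hB.le hS.le, Real.rpow_neg hB.le, Real.rpow_neg hS.le,
    rpow_cancel ha hq]
  field_simp

lemma rpow_aux2 {a S μ q t : ℝ} (ha : 0 < a) (hS : 0 < S) (hμ : 0 < μ)
    (hq : q * (1 + t) = 1) :
    (a ^ q / S) * (μ * S / a ^ q) ^ (-t) = a * μ ^ (-t) / S ^ (1 + t) := by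
  have hB : (0:ℝ) < a ^ q := Real.rpow_pos_of_pos ha q
  have hSt : (0:ℝ) < S ^ t := Real.rpow_pos_of_pos hS t
  have hμt : (0:ℝ) < μ ^ t := Real.rpow_pos_of_pos hμ t
  rw [Real.div_rpow (mul_nonneg hμ.le hS.le) hB.le, Real.mul_rpow hμ.le hS.le,
    Real.rpow_neg hμ.le, Real.rpow_neg hS.le, Real.rpow_neg hB.le,
    rpow_cancel ha hq, Real.rpow_add hS, Real.rpow_one]
  field_simp


lemma unitary_row_sum {M : Matrix m m ℂ} (hM : M * star M = 1) (i : m) :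
    ∑ j, Complex.normSq (M i j) = 1 := by
  have h := congrFun (congrFun hM i) i
  have h2 : (M * star M) i i = ((∑ j, Complex.normSq (M i j) : ℝ) : ℂ) := by
    rw [Matrix.mul_apply]
    push_cast
    refine Finset.sum_congr rfl (fun j _ => ?_)
    rw [Matrix.star_apply, show star (M i j) = (starRingEnd ℂ) (M i j) from rfl,
      Complex.mul_conj]
  rw [h2, Matrix.one_apply_eq] at h
  exact_mod_cast h

lemma unitary_col_sum {M : Matrix m m ℂ} (hM : star M * M = 1) (j : m) :
    ∑ i, Complex.normSq (M i j) = 1 := by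
  have h := congrFun (congrFun hM j) j
  have h2 : (star M * M) j j = ((∑ i, Complex.normSq (M i j) : ℝ) : ℂ) := by
    rw [Matrix.mul_apply]
    push_cast
    refine Finset.sum_congr rfl (fun i _ => ?_)
    rw [Matrix.star_apply, show star (M i j) = (starRingEnd ℂ) (M i j) from rfl]
    rw [mul_comm, Complex.mul_conj]
  rw [h2, Matrix.one_apply_eq] at h
  exact_mod_cast h

omit [DecidableEq m] in
lemma posDef_conj_herm {S R : Matrix m m ℂ} (hS : S.PosDef) (hR : R.PosDef) :
    (R * S * R).PosDef := by
  have hc : Rᴴ = R := hR.1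
  have herm : (R * S * R).IsHermitian := by
    have := Matrix.isHermitian_conjTranspose_mul_mul R hS.1
    rwa [hc] at this
  refine Matrix.PosDef.of_dotProduct_mulVec_pos herm fun x hx => ?_
  have hRx : R *ᵥ x ≠ 0 := by
    intro h
    have := hR.dotProduct_mulVec_pos hx
    rw [h] at this
    simp at this
  have h2 := hS.dotProduct_mulVec_pos hRx
  have h3 : R * S * R = Rᴴ * S * R := by rw [hc]
  rw [h3]
  simpa only [Matrix.star_mulVec, Matrix.dotProduct_mulVec, Matrix.vecMul_vecMul] using h2

/-- For `p ∈ [1,2)`, the infimum over positive definite density matrices `ω` of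
`Tr(ρ^{1/2} σ^{2/p−1} ρ^{1/2} ω^{1−2/p})` equals `(Tr[(ρ^{1/2}σ^{2/p−1}ρ^{1/2})^{p/2}])^{2/p}`,
attained uniquely at `ω_* = Y^{p/2}/Tr(Y^{p/2})`. -/
theorem araki_masuda_inf {n : ℕ} (ρ σ : Matrix (Fin n) (Fin n) ℂ)
    (hρ : ρ.PosDef) (hσ : σ.PosDef) (hρ1 : ρ.trace = 1) (hσ1 : σ.trace = 1)
    (p : ℝ) (hp1 : 1 ≤ p) (hp2 : p < 2) :
    letI Y : Matrix (Fin n) (Fin n) ℂ := mpow ρ (1/2) * mpow σ (2/p - 1) * mpow ρ (1/2)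
    IsLeast
      {x : ℝ | ∃ ω : Matrix (Fin n) (Fin n) ℂ, ω.PosDef ∧ ω.trace = 1 ∧
        x = ((Y * mpow ω (1 - 2/p)).trace).re}
      (((mpow Y (p/2)).trace).re ^ (2/p)) ∧
    ∀ ω : Matrix (Fin n) (Fin n) ℂ, ω.PosDef → ω.trace = 1 →
      ((Y * mpow ω (1 - 2/p)).trace).re = ((mpow Y (p/2)).trace).re ^ (2/p) →
      ω = (1 / (mpow Y (p/2)).trace) • mpow Y (p/2) := by
  have hp0 : (0:ℝ) < p := lt_of_lt_of_le one_pos hp1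
  have ht : (0:ℝ) < 2/p - 1 := by
    have : 1 < 2/p := (one_lt_div hp0).mpr hp2
    linarith
  have hexp : (1:ℝ) - 2/p = -(2/p - 1) := by ring
  have h1t : 1 + (2/p - 1) = 2/p := by ring
  have hq1 : p/2 * (2/p) = 1 := by field_simp
  have hq2 : 1 - (p/2) * (2/p - 1) = p/2 := by field_simp; ring
  have hne : Nonempty (Fin n) := by
    rcases Nat.eq_zero_or_pos n with h | h
    · subst h
      rw [Matrix.trace, Fin.sum_univ_zero] at hρ1
      exact absurd hρ1 (by norm_num)
    · exact Fin.pos_iff_nonempty.mp h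
  set Y : Matrix (Fin n) (Fin n) ℂ := mpow ρ (1/2) * mpow σ (2/p - 1) * mpow ρ (1/2)
    with hYdef
  -- Y is positive definite
  have hRpd : (mpow ρ (1/2)).PosDef := by
    rw [mpow_eq_conj hρ.1.eigenvectorUnitary.2 hρ.1.eigenvalues hρ.1.spectral_theorem (1/2)]
    exact posDef_conj_diag hρ.1.eigenvectorUnitary.2
      (fun i => Real.rpow_pos_of_pos (hρ.eigenvalues_pos i) _)
  have hSpd : (mpow σ (2/p - 1)).PosDef := by
    rw [mpow_eq_conj hσ.1.eigenvectorUnitary.2 hσ.1.eigenvalues hσ.1.spectral_theorem (2/p-1)]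
    exact posDef_conj_diag hσ.1.eigenvectorUnitary.2
      (fun i => Real.rpow_pos_of_pos (hσ.eigenvalues_pos i) _)
  have hYpd : Y.PosDef := posDef_conj_herm hSpd hRpd
  have hYh : Y.IsHermitian := hYpd.1
  set U : Matrix (Fin n) (Fin n) ℂ := (hYh.eigenvectorUnitary : Matrix (Fin n) (Fin n) ℂ)
    with hUdef
  have hU : U ∈ Matrix.unitaryGroup (Fin n) ℂ := hYh.eigenvectorUnitary.2
  set y : Fin n → ℝ := hYh.eigenvalues with hydef
  have hy : ∀ i, 0 < y i := fun i => hYpd.eigenvalues_pos i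
  have hYdec : Y = U * Matrix.diagonal (fun i => ((y i : ℝ) : ℂ)) * star U :=
    hYh.spectral_theorem
  set S : ℝ := ∑ i, y i ^ (p/2) with hSdef
  have hS : 0 < S :=
    Finset.sum_pos (fun i _ => Real.rpow_pos_of_pos (hy i) _) Finset.univ_nonempty
  have hYq : mpow Y (p/2) = U * Matrix.diagonal (fun i => ((y i ^ (p/2) : ℝ) : ℂ)) * star U :=
    mpow_eq_conj hU y hYdec (p/2)
  have htr : (mpow Y (p/2)).trace = (S : ℂ) := by
    rw [hYq, trace_conj_diag hU, hSdef]
    push_cast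
    rfl
  have htrre : ((mpow Y (p/2)).trace).re = S := by rw [htr]; exact Complex.ofReal_re _
  -- the minimizer
  have hωstar_dec : (1 / (mpow Y (p/2)).trace) • mpow Y (p/2)
      = U * Matrix.diagonal (fun i => ((y i ^ (p/2) / S : ℝ) : ℂ)) * star U := by
    rw [htr, hYq, ← smul_mul_assoc, ← mul_smul_comm]
    congr 1
    congr 1
    ext i j
    rcases eq_or_ne i j with h | h
    · subst h
      simp only [Matrix.smul_apply, Matrix.diagonal_apply_eq, smul_eq_mul]
      push_cast
      field_simp
    · simp [Matrix.diagonal_apply_ne _ h]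
  have hωstar_pd : ((1 / (mpow Y (p/2)).trace) • mpow Y (p/2)).PosDef := by
    rw [hωstar_dec]
    exact posDef_conj_diag hU (fun i => div_pos (Real.rpow_pos_of_pos (hy i) _) hS)
  have hωstar_tr : ((1 / (mpow Y (p/2)).trace) • mpow Y (p/2)).trace = 1 := by
    rw [hωstar_dec, trace_conj_diag hU]
    rw [← Complex.ofReal_sum]
    rw [← Finset.sum_div, ← hSdef, div_self hS.ne']
    exact Complex.ofReal_one
  -- value at the minimizer
  have hval_star : (((Y * mpow ((1 / (mpow Y (p/2)).trace) • mpow Y (p/2)) (1 - 2/p)).trace)).re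
      = S ^ (2/p) := by
    have hmp : mpow ((1 / (mpow Y (p/2)).trace) • mpow Y (p/2)) (1 - 2/p)
        = U * Matrix.diagonal
            (fun i => (((y i ^ (p/2) / S) ^ (-(2/p - 1)) : ℝ) : ℂ)) * star U := by
      rw [hexp]
      exact mpow_eq_conj hU _ hωstar_dec _
    rw [hmp]
    conv_lhs => rw [hYdec]
    rw [trace_pair hU hU, Complex.ofReal_re]
    rw [Matrix.mem_unitaryGroup_iff'.mp hU]
    have hsum1 : ∀ i : Fin n, ∑ j, y i * (y j ^ (p/2) / S) ^ (-(2/p-1)) * Complex.normSq ((1 : Matrix (Fin n) (Fin n) ℂ) i j)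
        = y i * (y i ^ (p/2) / S) ^ (-(2/p-1)) := by
      intro i
      rw [Finset.sum_eq_single i]
      · simp [Matrix.one_apply_eq]
      · intro j _ hji
        simp [Matrix.one_apply_ne (Ne.symm hji)]
      · simp
    rw [Finset.sum_congr rfl (fun i _ => hsum1 i)]
    have hqq : (p/2) * (1 + (2/p - 1)) = 1 := by rw [h1t]; exact hq1
    have hterm : ∀ i : Fin n, y i * (y i ^ (p/2) / S) ^ (-(2/p-1))
        = y i ^ (p/2) * S ^ (2/p - 1) := fun i => rpow_aux (hy i) hS hqq
    rw [Finset.sum_congr rfl (fun i _ => hterm i), ← Finset.sum_mul, ← hSdef]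
    conv_rhs => rw [← h1t]
    rw [Real.rpow_add hS, Real.rpow_one]
  -- the main inequality and equality analysis
  have key : ∀ ω : Matrix (Fin n) (Fin n) ℂ, ω.PosDef → ω.trace = 1 →
      (S ^ (2/p) ≤ ((Y * mpow ω (1 - 2/p)).trace).re ∧
        (((Y * mpow ω (1 - 2/p)).trace).re = S ^ (2/p) →
          ω = U * Matrix.diagonal (fun i => ((y i ^ (p/2) / S : ℝ) : ℂ)) * star U)) := by
    intro ω hω hωtr
    have hωh : ω.IsHermitian := hω.1
    set V : Matrix (Fin n) (Fin n) ℂ := (hωh.eigenvectorUnitary : Matrix (Fin n) (Fin n) ℂ)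
      with hVdef
    have hV : V ∈ Matrix.unitaryGroup (Fin n) ℂ := hωh.eigenvectorUnitary.2
    set w : Fin n → ℝ := hωh.eigenvalues with hwdef
    have hw : ∀ j, 0 < w j := fun j => hω.eigenvalues_pos j
    have hωdec : ω = V * Matrix.diagonal (fun j => ((w j : ℝ) : ℂ)) * star V :=
      hωh.spectral_theorem
    have hwsum : ∑ j, w j = 1 := by
      have h1 : ω.trace = ((∑ j, w j : ℝ) : ℂ) := by
        conv_lhs => rw [hωdec]
        rw [trace_conj_diag hV, Complex.ofReal_sum]
      rw [hωtr] at h1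
      exact_mod_cast h1.symm
    have hmpω : mpow ω (1 - 2/p)
        = V * Matrix.diagonal (fun j => ((w j ^ (-(2/p - 1)) : ℝ) : ℂ)) * star V := by
      rw [hexp]; exact mpow_eq_conj hV w hωdec _
    set M : Matrix (Fin n) (Fin n) ℂ := star U * V with hMdef
    have hU2 : U * star U = 1 := Matrix.mem_unitaryGroup_iff.mp hU
    have hU1 : star U * U = 1 := Matrix.mem_unitaryGroup_iff'.mp hU
    have hV2 : V * star V = 1 := Matrix.mem_unitaryGroup_iff.mp hV
    have hV1 : star V * V = 1 := Matrix.mem_unitaryGroup_iff'.mp hV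
    have hM1 : M * star M = 1 := by
      rw [hMdef, Matrix.star_mul, star_star, Matrix.mul_assoc, ← Matrix.mul_assoc V, hV2,
        Matrix.one_mul, hU1]
    have hM2 : star M * M = 1 := by
      rw [hMdef, Matrix.star_mul, star_star, Matrix.mul_assoc, ← Matrix.mul_assoc U, hU2,
        Matrix.one_mul, hV1]
    set c : Fin n → Fin n → ℝ := fun i j => Complex.normSq (M i j) with hcdef
    have hcnn : ∀ i j, 0 ≤ c i j := fun i j => Complex.normSq_nonneg _
    have crow : ∀ i, ∑ j, c i j = 1 := fun i => unitary_row_sum hM1 i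
    have ccol : ∀ j, ∑ i, c i j = 1 := fun j => unitary_col_sum hM2 j
    have hvalue : ((Y * mpow ω (1 - 2/p)).trace).re
        = ∑ i, ∑ j, y i * w j ^ (-(2/p-1)) * c i j := by
      rw [hmpω]
      conv_lhs => rw [hYdec]
      rw [trace_pair hU hV, Complex.ofReal_re]
    set μ : Fin n → ℝ := fun i => ∑ j, c i j * w j with hμdef
    have hμpos : ∀ i, 0 < μ i := by
      intro i
      have hex : ∃ j, 0 < c i j := by
        by_contra hcon
        push_neg at hcon
        have h0 : ∑ j, c i j = 0 :=
          Finset.sum_eq_zero (fun j _ => le_antisymm (hcon j) (hcnn i j))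
        rw [crow i] at h0; norm_num at h0
      obtain ⟨j0, hj0⟩ := hex
      exact Finset.sum_pos' (fun j _ => mul_nonneg (hcnn i j) (hw j).le)
        ⟨j0, Finset.mem_univ j0, mul_pos hj0 (hw j0)⟩
    have hμsum : ∑ i, μ i = 1 := by
      rw [hμdef]
      rw [Finset.sum_comm]
      calc ∑ j, ∑ i, c i j * w j = ∑ j, w j := by
            refine Finset.sum_congr rfl (fun j _ => ?_)
            rw [← Finset.sum_mul, ccol j, one_mul]
        _ = 1 := hwsum
    have hrow : ∀ i, μ i ^ (-(2/p-1)) ≤ ∑ j, c i j * w j ^ (-(2/p-1)) :=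
      fun i => (jensen_rpow_neg ht (fun j => c i j) w (hcnn i) hw (crow i)).1
    have hval2 : ((Y * mpow ω (1 - 2/p)).trace).re
        = ∑ i, y i * (∑ j, c i j * w j ^ (-(2/p-1))) := by
      rw [hvalue]
      refine Finset.sum_congr rfl (fun i _ => ?_)
      rw [Finset.mul_sum]
      exact Finset.sum_congr rfl (fun j _ => by ring)
    have hA_le : ∑ i, y i * μ i ^ (-(2/p-1)) ≤ ((Y * mpow ω (1 - 2/p)).trace).re := by
      rw [hval2]
      exact Finset.sum_le_sum (fun i _ => mul_le_mul_of_nonneg_left (hrow i) (hy i).le)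
    have hqq : (p/2) * (1 + (2/p - 1)) = 1 := by rw [h1t]; exact hq1
    set ν : Fin n → ℝ := fun i => y i ^ (p/2) / S with hνdef
    set z : Fin n → ℝ := fun i => μ i * S / y i ^ (p/2) with hzdef
    have hν : ∀ i, 0 < ν i := fun i => div_pos (Real.rpow_pos_of_pos (hy i) _) hS
    have hz : ∀ i, 0 < z i := fun i =>
      div_pos (mul_pos (hμpos i) hS) (Real.rpow_pos_of_pos (hy i) _)
    have hνz : ∑ i, ν i * z i = 1 := by
      calc ∑ i, ν i * z i = ∑ i, μ i := by
            refine Finset.sum_congr rfl (fun i _ => ?_)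
            show y i ^ (p/2) / S * (μ i * S / y i ^ (p/2)) = μ i
            have h1 : y i ^ (p/2) ≠ 0 := (Real.rpow_pos_of_pos (hy i) _).ne'
            field_simp
        _ = 1 := hμsum
    have hterm2 : ∀ i, ν i * z i ^ (-(2/p-1))
        = y i * μ i ^ (-(2/p-1)) / S ^ (1 + (2/p-1)) :=
      fun i => rpow_aux2 (hy i) hS (hμpos i) hqq
    have hνsum : ∑ i, ν i = 1 := by
      show ∑ i, y i ^ (p/2) / S = 1
      rw [← Finset.sum_div, ← hSdef, div_self hS.ne']
    have hglob := jensen_rpow_neg ht ν z (fun i => (hν i).le) hz hνsum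
    have hSp : (0:ℝ) < S ^ (2/p) := Real.rpow_pos_of_pos hS _
    have hsums : ∑ i, ν i * z i ^ (-(2/p-1))
        = (∑ i, y i * μ i ^ (-(2/p-1))) / S ^ (2/p) := by
      rw [Finset.sum_congr rfl (fun i _ => hterm2 i), ← Finset.sum_div, h1t]
    have hglob1 : S ^ (2/p) ≤ ∑ i, y i * μ i ^ (-(2/p-1)) := by
      have h1 := hglob.1
      rw [hνz, Real.one_rpow, hsums] at h1
      have h2 := (one_le_div hSp).mp h1
      linarith
    constructor
    · exact le_trans hglob1 hA_le
    intro heq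
    have hAeq : ∑ i, y i * μ i ^ (-(2/p-1)) = S ^ (2/p) := by
      refine le_antisymm ?_ hglob1
      rw [← heq]; exact hA_le
    have hroweq : ∀ i, ∑ j, c i j * w j ^ (-(2/p-1)) = μ i ^ (-(2/p-1)) := by
      by_contra hcon
      push_neg at hcon
      obtain ⟨i0, hi0⟩ := hcon
      have hlt : y i0 * μ i0 ^ (-(2/p-1)) < y i0 * (∑ j, c i0 j * w j ^ (-(2/p-1))) :=
        mul_lt_mul_of_pos_left (lt_of_le_of_ne (hrow i0) (Ne.symm hi0)) (hy i0)
      have hstrict : ∑ i, y i * μ i ^ (-(2/p-1))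
          < ∑ i, y i * (∑ j, c i j * w j ^ (-(2/p-1))) :=
        Finset.sum_lt_sum (fun i _ => mul_le_mul_of_nonneg_left (hrow i) (hy i).le)
          ⟨i0, Finset.mem_univ i0, hlt⟩
      rw [← hval2, hAeq, heq] at hstrict
      exact lt_irrefl _ hstrict
    have hμeq : ∀ i, μ i = y i ^ (p/2) / S := by
      have h1 : ∑ i, ν i * z i ^ (-(2/p-1)) ≤ (∑ i, ν i * z i) ^ (-(2/p-1)) := by
        rw [hνz, Real.one_rpow, hsums, hAeq, div_self hSp.ne']
      have h2 := hglob.2 h1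
      intro i
      have h3 := h2 i (hν i)
      rw [hνz] at h3
      have h4 : y i ^ (p/2) ≠ 0 := (Real.rpow_pos_of_pos (hy i) _).ne'
      have h5 : μ i * S / y i ^ (p/2) = 1 := h3
      rw [div_eq_one_iff_eq h4] at h5
      rw [eq_div_iff hS.ne']
      linarith
    have hkey2 : ∀ i j, M i j ≠ 0 → w j = μ i := by
      intro i j hMij
      have hc : 0 < c i j := Complex.normSq_pos.mpr hMij
      exact (jensen_rpow_neg ht (fun k => c i k) w (hcnn i) hw (crow i)).2
        (le_of_eq (hroweq i)) j hc
    have hMdiag : M * Matrix.diagonal (fun j => ((w j : ℝ) : ℂ)) * star M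
        = Matrix.diagonal (fun i => ((μ i : ℝ) : ℂ)) := by
      ext i k
      have h5 : (M * Matrix.diagonal (fun j => ((w j : ℝ):ℂ)) * star M) i k
          = ∑ j, M i j * (w j : ℂ) * star (M k j) := by
        rw [Matrix.mul_apply]
        refine Finset.sum_congr rfl (fun j _ => ?_)
        rw [Matrix.mul_diagonal, Matrix.star_apply]
      have h6 : ∀ j, M i j * (w j : ℂ) * star (M k j) = (μ i : ℂ) * (M i j * star (M k j)) := by
        intro j
        by_cases hM0 : M i j = 0
        · rw [hM0]; ring
        · rw [hkey2 i j hM0]; ring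
      have h7 : ∑ j, M i j * star (M k j) = (M * star M) i k := by
        rw [Matrix.mul_apply]
        exact Finset.sum_congr rfl (fun j _ => by rw [Matrix.star_apply])
      rw [h5, Finset.sum_congr rfl (fun j _ => h6 j), ← Finset.mul_sum, h7, hM1]
      rcases eq_or_ne i k with h | h
      · subst h; rw [Matrix.one_apply_eq, Matrix.diagonal_apply_eq, mul_one]
      · rw [Matrix.one_apply_ne h, Matrix.diagonal_apply_ne _ h, mul_zero]
    have hVU : V = U * M := by
      rw [hMdef, ← Matrix.mul_assoc, hU2, Matrix.one_mul]
    have hωU : ω = U * Matrix.diagonal (fun i => ((μ i : ℝ) : ℂ)) * star U := by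
      rw [hωdec, hVU, Matrix.star_mul, ← hMdiag]
      simp only [Matrix.mul_assoc]
    rw [hωU]
    exact congrArg (fun D => U * D * star U)
      (congrArg Matrix.diagonal (funext fun i => by rw [hμeq i]))
  constructor
  · constructor
    · exact ⟨(1 / (mpow Y (p/2)).trace) • mpow Y (p/2), hωstar_pd, hωstar_tr,
        by rw [hval_star, htrre]⟩
    · rintro x ⟨ω, hω, hωtr, rfl⟩
      rw [htrre]
      exact (key ω hω hωtr).1
  · intro ω hω hωtr hveq
    rw [htrre] at hveq
    rw [hωstar_dec]
    exact (key ω hω hωtr).2 hveq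
end

section
/- For α ∈ (0,1) and x > 0, x^α = (sin(πα)/π) ∫₀^∞ t^α (1/t − 1/(t+x)) dt. -/
open Real MeasureTheory Set

lemma rpow_rep_beta_val (α : ℝ) (h0 : 0 < α) (h1 : α < 1) :
    ∫ y in Ioo (0:ℝ) 1, y ^ (α - 1) * (1 - y) ^ (-α) = π / Real.sin (π * α) := by
  have hc : Complex.Gamma α * Complex.Gamma (1 - α) =
      Complex.Gamma (α + (1 - α)) * Complex.betaIntegral α (1 - α) :=
    Complex.Gamma_mul_Gamma_eq_betaIntegral (by simpa using h0) (by simp [h1])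
  have hbeta : Complex.betaIntegral α (1 - α) =
      ((∫ y in (0:ℝ)..1, y ^ (α - 1) * (1 - y) ^ (-α) : ℝ) : ℂ) := by
    rw [Complex.betaIntegral, ← intervalIntegral.integral_ofReal]
    apply intervalIntegral.integral_congr
    intro y hy
    simp only [uIcc_of_le (by norm_num : (0:ℝ) ≤ 1), mem_Icc] at hy
    show (y:ℂ) ^ ((α:ℂ) - 1) * (1 - (y:ℂ)) ^ (1 - (α:ℂ) - 1)
        = ((y ^ (α - 1) * (1 - y) ^ (-α) : ℝ) : ℂ)
    rw [Complex.ofReal_mul, Complex.ofReal_cpow hy.1,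
      Complex.ofReal_cpow (by linarith : (0:ℝ) ≤ 1 - y)]
    push_cast
    ring_nf
  have hG : Complex.Gamma (α + (1 - α)) = 1 := by norm_num [Complex.Gamma_one]
  rw [hG, one_mul, hbeta] at hc
  have hr : (Real.Gamma α * Real.Gamma (1 - α) : ℂ) =
      ((∫ y in (0:ℝ)..1, y ^ (α - 1) * (1 - y) ^ (-α) : ℝ) : ℂ) := by
    rw [← hc]; push_cast [← Complex.Gamma_ofReal]; ring_nf
  have hr' : Real.Gamma α * Real.Gamma (1 - α)
      = ∫ y in (0:ℝ)..1, y ^ (α - 1) * (1 - y) ^ (-α) := by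
    exact_mod_cast hr
  rw [← integral_Ioc_eq_integral_Ioo,
    ← intervalIntegral.integral_of_le (by norm_num : (0:ℝ) ≤ 1), ← hr',
    Real.Gamma_mul_Gamma_one_sub]

lemma rpow_rep_frac_val (α : ℝ) (h0 : 0 < α) (h1 : α < 1) :
    ∫ u in Ioi (0:ℝ), u ^ (α - 1) / (1 + u) = π / Real.sin (π * α) := by
  rw [← rpow_rep_beta_val α h0 h1]
  have himg : (fun y : ℝ => y / (1 - y)) '' Ioo 0 1 = Ioi 0 := by
    ext u
    constructor
    · rintro ⟨y, ⟨hy0, hy1⟩, rfl⟩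
      exact div_pos hy0 (by linarith)
    · intro hu
      refine ⟨u / (1 + u), ⟨div_pos hu (by linarith [mem_Ioi.mp hu]), ?_⟩, ?_⟩
      · rw [div_lt_one (by linarith [mem_Ioi.mp hu])]; linarith [mem_Ioi.mp hu]
      · have h1u : (1:ℝ) + u ≠ 0 := by have := mem_Ioi.mp hu; positivity
        field_simp
        ring
  have hderiv : ∀ y ∈ Ioo (0:ℝ) 1, HasDerivWithinAt (fun y : ℝ => y / (1 - y))
      (((1 - y) ^ 2)⁻¹) (Ioo 0 1) y := by
    intro y hy
    have hz : (1:ℝ) - y ≠ 0 := by have := hy.2; intro h; simp only [mem_Ioo] at hy; linarith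
    have := (hasDerivAt_id' y).div ((hasDerivAt_id' y).const_sub 1) hz
    exact this.hasDerivWithinAt.congr_deriv (by ring)
  have hinj : InjOn (fun y : ℝ => y / (1 - y)) (Ioo 0 1) := by
    intro a ha b hb hab
    simp only [mem_Ioo] at ha hb
    have ha' : (1:ℝ) - a ≠ 0 := by linarith
    have hb' : (1:ℝ) - b ≠ 0 := by linarith
    field_simp at hab
    linarith
  rw [← himg, integral_image_eq_integral_abs_deriv_smul measurableSet_Ioo hderiv hinj]
  refine setIntegral_congr_fun measurableSet_Ioo fun y hy => ?_
  simp only [mem_Ioo] at hy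
  have hz : (0:ℝ) < 1 - y := by linarith
  have hden : 1 + y / (1 - y) = (1 - y)⁻¹ := by field_simp; ring
  rw [smul_eq_mul, hden, abs_of_pos (by positivity), Real.div_rpow hy.1.le hz.le]
  have hh : (1-y) ^ (-α) = (((1-y):ℝ)^(2:ℕ))⁻¹ * ((1-y)^(α-1))⁻¹ * (1-y) := by
    rw [← Real.rpow_natCast (1-y) 2, ← Real.rpow_neg hz.le, ← Real.rpow_neg hz.le,
      ← Real.rpow_add hz]
    nth_rewrite 3 [← Real.rpow_one (1-y)]
    rw [← Real.rpow_add hz]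
    congr 1
    ring
  rw [hh]
  have hne : ((1-y):ℝ)^(α-1) ≠ 0 := (Real.rpow_pos_of_pos hz (α-1)).ne'
  field_simp

lemma rpow_rep_scaled (α x : ℝ) (h0 : 0 < α) (h1 : α < 1) (hx : 0 < x) :
    ∫ t in Ioi (0:ℝ), t ^ (α - 1) * (x / (t + x))
      = x ^ α * ∫ u in Ioi (0:ℝ), u ^ (α - 1) / (1 + u) := by
  have key := MeasureTheory.integral_comp_mul_left_Ioi
    (fun t : ℝ => t ^ (α - 1) * (x / (t + x))) 0 hx
  simp only [mul_zero, smul_eq_mul] at key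
  have hL : (∫ u in Ioi (0:ℝ), (x * u) ^ (α - 1) * (x / (x * u + x)))
      = x ^ (α - 1) * ∫ u in Ioi (0:ℝ), u ^ (α - 1) / (1 + u) := by
    rw [← MeasureTheory.integral_const_mul]
    refine setIntegral_congr_fun measurableSet_Ioi fun u hu => ?_
    have hu' : (0:ℝ) < u := hu
    rw [Real.mul_rpow hx.le hu'.le]
    have he : x * u + x = x * (1 + u) := by ring
    rw [he]
    have h1u : (0:ℝ) < 1 + u := by linarith
    field_simp
  rw [hL] at key
  have hxa : x ^ α = x ^ (α - 1) * x := by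
    rw [← Real.rpow_add_one hx.ne']; norm_num
  rw [hxa]
  field_simp at key ⊢
  nlinarith [key]

/-- For `α ∈ (0,1)` and `x > 0`,
`x^α = (sin(πα)/π) ∫₀^∞ t^α (1/t − 1/(t+x)) dt`. -/
theorem rpow_integral_rep_pos (α x : ℝ) (hα : α ∈ Set.Ioo (0:ℝ) 1) (hx : 0 < x) :
    x ^ α = (Real.sin (Real.pi * α) / Real.pi) *
      ∫ t in Set.Ioi (0:ℝ), t ^ α * (1/t - 1/(t + x)) := by
  obtain ⟨h0, h1⟩ := hα
  have hI : (∫ t in Set.Ioi (0:ℝ), t ^ α * (1/t - 1/(t + x)))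
      = ∫ t in Ioi (0:ℝ), t ^ (α - 1) * (x / (t + x)) := by
    refine setIntegral_congr_fun measurableSet_Ioi fun t ht => ?_
    have ht' : (0:ℝ) < t := ht
    have htx : (0:ℝ) < t + x := by linarith
    rw [Real.rpow_sub ht', Real.rpow_one]
    field_simp
    ring
  rw [hI, rpow_rep_scaled α x h0 h1 hx, rpow_rep_frac_val α h0 h1]
  have hs : Real.sin (π * α) ≠ 0 := by
    refine (Real.sin_pos_of_pos_of_lt_pi ?_ ?_).ne'
    · positivity
    · nth_rewrite 2 [← mul_one π]
      exact mul_lt_mul_of_pos_left h1 Real.pi_pos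
  field_simp
end

section
/- For α ∈ (−1,0) and x > 0, x^α = −(sin(πα)/π) ∫₀^∞ t^α/(t+x) dt. -/
open MeasureTheory Set Real intervalIntegral

lemma beta_real_eq (u : ℝ) (hu : u ∈ Set.Ioo (0:ℝ) 1) :
    ∫ s in Set.Ioo (0:ℝ) 1, s ^ (u - 1) * (1 - s) ^ (-u)
      = Real.pi / Real.sin (Real.pi * u) := by
  have hu0 : (0:ℝ) < u := hu.1
  have hu1 : u < 1 := hu.2
  have hre : 0 < Complex.re (u : ℂ) := by simpa using hu0
  have hre' : 0 < Complex.re (1 - (u:ℂ)) := by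
    simp [Complex.sub_re]; linarith
  have h1 : Complex.Gamma u * Complex.Gamma (1 - u)
      = Complex.Gamma 1 * Complex.betaIntegral u (1 - u) := by
    have := Complex.Gamma_mul_Gamma_eq_betaIntegral hre hre'
    rwa [add_sub_cancel] at this
  have h2 : Complex.betaIntegral u (1 - u) = ↑Real.pi / Complex.sin (↑Real.pi * ↑u) := by
    rw [Complex.Gamma_one, one_mul] at h1
    rw [← h1, Complex.Gamma_mul_Gamma_one_sub]
  -- rewrite beta integral as ofReal of real integral
  have h3 : Complex.betaIntegral u (1 - u)
      = ((∫ s in Set.Ioo (0:ℝ) 1, s ^ (u - 1) * (1 - s) ^ (-u) : ℝ) : ℂ) := by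
    have hIoo : (∫ s in Set.Ioo (0:ℝ) 1, s ^ (u - 1) * (1 - s) ^ (-u))
        = ∫ s in (0:ℝ)..1, s ^ (u - 1) * (1 - s) ^ (-u) := by
      rw [intervalIntegral.integral_of_le zero_le_one, integral_Ioc_eq_integral_Ioo]
    rw [hIoo, Complex.betaIntegral, ← intervalIntegral.integral_ofReal]
    refine intervalIntegral.integral_congr fun x hx => ?_
    rw [Set.uIcc_of_le zero_le_one] at hx
    have hx0 : (0:ℝ) ≤ x := hx.1
    have hx1 : (0:ℝ) ≤ 1 - x := by linarith [hx.2]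
    rw [show ((u:ℂ) - 1) = ((u - 1 : ℝ) : ℂ) by push_cast; ring,
      show (1 - (u:ℂ) - 1) = ((-u : ℝ) : ℂ) by push_cast; ring,
      show (1 - (x:ℂ)) = ((1 - x : ℝ) : ℂ) by push_cast; ring,
      ← Complex.ofReal_cpow hx0, ← Complex.ofReal_cpow hx1, ← Complex.ofReal_mul]
  have h4 : ((∫ s in Set.Ioo (0:ℝ) 1, s ^ (u - 1) * (1 - s) ^ (-u) : ℝ) : ℂ)
      = ((Real.pi / Real.sin (Real.pi * u) : ℝ) : ℂ) := by
    rw [← h3, h2]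
    push_cast [Complex.ofReal_sin]
    norm_num
  exact_mod_cast h4

lemma subst_eq (α : ℝ) :
    ∫ t in Set.Ioi (0:ℝ), t ^ α / (t + 1)
      = ∫ s in Set.Ioo (0:ℝ) 1, s ^ α * (1 - s) ^ (-α - 1) := by
  have himg : (fun s : ℝ => s / (1 - s)) '' Set.Ioo 0 1 = Set.Ioi (0:ℝ) := by
    ext t
    constructor
    · rintro ⟨s, hs, rfl⟩
      exact div_pos hs.1 (by linarith [hs.2])
    · intro ht
      refine ⟨t / (1 + t), ⟨div_pos ht (by linarith [Set.mem_Ioi.mp ht]), ?_⟩, ?_⟩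
      · rw [div_lt_one (by linarith [Set.mem_Ioi.mp ht])]; linarith [Set.mem_Ioi.mp ht]
      · have ht0 : (0:ℝ) < t := ht
        have h1t : (1:ℝ) + t ≠ 0 := ne_of_gt (by linarith)
        show (t / (1 + t)) / (1 - t / (1 + t)) = t
        have h2 : 1 - t / (1 + t) = 1 / (1 + t) := by
          field_simp; ring
        rw [h2]
        field_simp [h1t]
  have hderiv : ∀ s ∈ Set.Ioo (0:ℝ) 1,
      HasDerivWithinAt (fun s : ℝ => s / (1 - s)) (1 / (1 - s)^2) (Set.Ioo 0 1) s := by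
    intro s hs
    have hne : (1:ℝ) - s ≠ 0 := ne_of_gt (by linarith [hs.2])
    have : HasDerivAt (fun s : ℝ => s / (1 - s))
        ((1 * (1 - s) - s * (-1)) / (1 - s)^2) s := by
      exact (hasDerivAt_id s).div (((hasDerivAt_id s).neg).const_add 1) hne
    have h2 : (1 * (1 - s) - s * (-1)) / (1 - s)^2 = 1 / (1 - s)^2 := by ring_nf
    rw [h2] at this
    exact this.hasDerivWithinAt
  have hinj : Set.InjOn (fun s : ℝ => s / (1 - s)) (Set.Ioo 0 1) := by
    intro a ha b hb hab
    have hna : (1:ℝ) - a ≠ 0 := ne_of_gt (by linarith [ha.2])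
    have hnb : (1:ℝ) - b ≠ 0 := ne_of_gt (by linarith [hb.2])
    field_simp at hab
    linarith
  have := MeasureTheory.integral_image_eq_integral_abs_deriv_smul measurableSet_Ioo
    hderiv hinj (fun t => t ^ α / (t + 1))
  rw [himg] at this
  rw [this]
  refine setIntegral_congr_fun measurableSet_Ioo fun s hs => ?_
  have hs0 : (0:ℝ) < s := hs.1
  have hs1 : (0:ℝ) < 1 - s := by linarith [hs.2]
  have key : s / (1 - s) + 1 = 1 / (1 - s) := by field_simp; ring
  rw [smul_eq_mul, key]
  have h1 : (s / (1 - s)) ^ α = s ^ α * (1 - s) ^ (-α) := by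
    rw [Real.div_rpow hs0.le hs1.le, Real.rpow_neg hs1.le, div_eq_mul_inv]
  have habs : |1 / (1 - s)^2| = (1 - s) ^ (-(2:ℝ)) := by
    rw [abs_of_pos (by positivity), Real.rpow_neg hs1.le, Real.rpow_two, one_div]
  rw [habs, h1]
  rw [one_div, div_inv_eq_mul]
  have e1 : (1 - s) ^ (-(2:ℝ)) * (s ^ α * (1 - s) ^ (-α) * (1 - s))
      = s ^ α * ((1 - s) ^ (-(2:ℝ)) * (1 - s) ^ (-α) * (1 - s) ^ (1:ℝ)) := by
    rw [Real.rpow_one]; ring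
  rw [e1, ← Real.rpow_add hs1, ← Real.rpow_add hs1]
  ring_nf

/-- For `α ∈ (−1,0)` and `x > 0`,
`x^α = −(sin(πα)/π) ∫₀^∞ t^α/(t+x) dt`. -/
theorem rpow_integral_rep_neg (α x : ℝ) (hα : α ∈ Set.Ioo (-1:ℝ) 0) (hx : 0 < x) :
    x ^ α = -(Real.sin (Real.pi * α) / Real.pi) *
      ∫ t in Set.Ioi (0:ℝ), t ^ α / (t + x) := by
  obtain ⟨hα1, hα0⟩ := hα
  -- scaling
  have hscale : ∫ t in Set.Ioi (0:ℝ), t ^ α / (t + x)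
      = x ^ α * ∫ t in Set.Ioi (0:ℝ), t ^ α / (t + 1) := by
    have := MeasureTheory.integral_comp_mul_left_Ioi
      (g := fun t => t ^ α / (t + x)) 0 hx
    rw [mul_zero] at this
    have hL : ∫ s in Set.Ioi (0:ℝ), (x * s) ^ α / (x * s + x)
        = x ^ (α - 1) * ∫ s in Set.Ioi (0:ℝ), s ^ α / (s + 1) := by
      rw [← MeasureTheory.integral_const_mul]
      refine setIntegral_congr_fun measurableSet_Ioi fun s hs => ?_
      have hs0 : (0:ℝ) < s := hs
      rw [Real.mul_rpow hx.le hs0.le]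
      have : x * s + x = x * (s + 1) := by ring
      rw [this]
      rw [Real.rpow_sub hx, Real.rpow_one]
      field_simp
    rw [hL] at this
    have hxne : x ≠ 0 := hx.ne'
    have : x * (x ^ (α - 1) * ∫ s in Set.Ioi (0:ℝ), s ^ α / (s + 1))
        = ∫ t in Set.Ioi (0:ℝ), t ^ α / (t + x) := by
      rw [this, smul_eq_mul]; field_simp
    rw [← this, ← mul_assoc, ← Real.rpow_one_add' hx.le (by intro h; linarith)]
    norm_num
  -- beta evaluation
  have hu : α + 1 ∈ Set.Ioo (0:ℝ) 1 := ⟨by linarith, by linarith⟩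
  have hbeta := beta_real_eq (α + 1) hu
  have heq1 : ∫ t in Set.Ioi (0:ℝ), t ^ α / (t + 1)
      = Real.pi / Real.sin (Real.pi * (α + 1)) := by
    rw [subst_eq α, ← hbeta]
    refine setIntegral_congr_fun measurableSet_Ioo fun s _ => ?_
    ring_nf
  have hsin : Real.sin (Real.pi * (α + 1)) = -Real.sin (Real.pi * α) := by
    have : Real.pi * (α + 1) = Real.pi * α + Real.pi := by ring
    rw [this, Real.sin_add_pi]
  have hsinne : Real.sin (Real.pi * α) < 0 := by
    apply Real.sin_neg_of_neg_of_neg_pi_lt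
    · exact mul_neg_of_pos_of_neg Real.pi_pos hα0
    · nlinarith [Real.pi_pos]
  rw [hscale, heq1, hsin]
  have hpine : Real.pi ≠ 0 := Real.pi_ne_zero
  have hs0 : Real.sin (Real.pi * α) ≠ 0 := hsinne.ne
  field_simp
end

section
/- Let U : H → K be a linear isometry between finite-dimensional Hilbert spaces (U*U = 1), let a be a self-adjoint operator on K, and set P = UU*. If (U*aU)² = U*a²U, then Pa = aP, i.e. a = PaP + QaQ with Q = 1 − P. -/
open LinearMap

lemma adjoint_comp_self_eq_zero {H K : Type*}
    [NormedAddCommGroup H] [InnerProductSpace ℂ H] [FiniteDimensional ℂ H]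
    [NormedAddCommGroup K] [InnerProductSpace ℂ K] [FiniteDimensional ℂ K]
    (B : H →ₗ[ℂ] K) (h : LinearMap.adjoint B ∘ₗ B = 0) : B = 0 := by
  ext x
  have h1 : (inner ℂ (B x) (B x) : ℂ) = 0 := by
    have h3 := LinearMap.adjoint_inner_right B x (B x)
    have h2 : LinearMap.adjoint B (B x) = 0 := by
      have := congrArg (fun f => f x) h
      simpa using this
    rw [h2] at h3
    simpa using h3.symm
  simpa using inner_self_eq_zero.mp h1

/-- Equality in Jensen's operator inequality: if `U` is a linear isometry (`U*U = 1`),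
`a` is self-adjoint and `(U*aU)² = U*a²U`, then `a` commutes with `P = UU*`, i.e.
`a = PaP + QaQ` with `Q = 1 − P`. -/
theorem jensen_equality_commutes {H K : Type*}
    [NormedAddCommGroup H] [InnerProductSpace ℂ H] [FiniteDimensional ℂ H]
    [NormedAddCommGroup K] [InnerProductSpace ℂ K] [FiniteDimensional ℂ K]
    (U : H →ₗ[ℂ] K) (hU : LinearMap.adjoint U ∘ₗ U = LinearMap.id)
    (a : K →ₗ[ℂ] K) (ha : LinearMap.adjoint a = a)
    (heq : (LinearMap.adjoint U ∘ₗ a ∘ₗ U) ∘ₗ (LinearMap.adjoint U ∘ₗ a ∘ₗ U) =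
      LinearMap.adjoint U ∘ₗ (a ∘ₗ a) ∘ₗ U) :
    (U ∘ₗ LinearMap.adjoint U) ∘ₗ a = a ∘ₗ (U ∘ₗ LinearMap.adjoint U) ∧
    a = (U ∘ₗ LinearMap.adjoint U) ∘ₗ a ∘ₗ (U ∘ₗ LinearMap.adjoint U) +
      (LinearMap.id - U ∘ₗ LinearMap.adjoint U) ∘ₗ a ∘ₗ
        (LinearMap.id - U ∘ₗ LinearMap.adjoint U) := by
  set P : K →ₗ[ℂ] K := U ∘ₗ LinearMap.adjoint U with hPdef
  have hP2 : P ∘ₗ P = P := by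
    rw [hPdef]
    calc (U ∘ₗ LinearMap.adjoint U) ∘ₗ (U ∘ₗ LinearMap.adjoint U)
        = U ∘ₗ (LinearMap.adjoint U ∘ₗ U) ∘ₗ LinearMap.adjoint U := by
          simp only [LinearMap.comp_assoc]
      _ = U ∘ₗ LinearMap.adjoint U := by rw [hU]; simp
  have hPadj : LinearMap.adjoint P = P := by
    rw [hPdef, LinearMap.adjoint_comp, LinearMap.adjoint_adjoint]
  -- B = (1 - P) a U
  set B : H →ₗ[ℂ] K := a ∘ₗ U - P ∘ₗ a ∘ₗ U with hBdef
  have hBadj : LinearMap.adjoint B = LinearMap.adjoint U ∘ₗ a -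
      (LinearMap.adjoint U ∘ₗ a) ∘ₗ P := by
    rw [hBdef]
    simp only [map_sub, LinearMap.adjoint_comp, ha, hPadj, LinearMap.comp_assoc]
  have hB0 : B = 0 := by
    apply adjoint_comp_self_eq_zero
    rw [hBadj, hBdef]
    have key : (LinearMap.adjoint U ∘ₗ a) ∘ₗ P ∘ₗ a ∘ₗ U
        = LinearMap.adjoint U ∘ₗ (a ∘ₗ a) ∘ₗ U := by
      rw [← heq, hPdef]
      simp only [LinearMap.comp_assoc]
    have hUaaU : (LinearMap.adjoint U ∘ₗ a) ∘ₗ a ∘ₗ U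
        = LinearMap.adjoint U ∘ₗ (a ∘ₗ a) ∘ₗ U := by
      simp only [LinearMap.comp_assoc]
    rw [LinearMap.sub_comp, LinearMap.comp_sub, LinearMap.comp_sub]
    have hPP : (LinearMap.adjoint U ∘ₗ a) ∘ₗ P ∘ₗ P ∘ₗ a ∘ₗ U
        = (LinearMap.adjoint U ∘ₗ a) ∘ₗ P ∘ₗ a ∘ₗ U := by
      rw [← LinearMap.comp_assoc (a ∘ₗ U) P P, hP2]
    have expand : ((LinearMap.adjoint U ∘ₗ a) ∘ₗ P) ∘ₗ (P ∘ₗ a ∘ₗ U)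
        = (LinearMap.adjoint U ∘ₗ a) ∘ₗ P ∘ₗ P ∘ₗ a ∘ₗ U := by
      simp only [LinearMap.comp_assoc]
    have expand2 : ((LinearMap.adjoint U ∘ₗ a) ∘ₗ P) ∘ₗ (a ∘ₗ U)
        = (LinearMap.adjoint U ∘ₗ a) ∘ₗ P ∘ₗ a ∘ₗ U := by
      simp only [LinearMap.comp_assoc]
    have expand3 : (LinearMap.adjoint U ∘ₗ a) ∘ₗ (P ∘ₗ a ∘ₗ U)
        = (LinearMap.adjoint U ∘ₗ a) ∘ₗ P ∘ₗ a ∘ₗ U := by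
      simp only [LinearMap.comp_assoc]
    rw [expand, expand2, expand3, hPP, hUaaU, key]
    abel
  -- from B = 0 : a ∘ U = P ∘ a ∘ U
  have haU : a ∘ₗ U = P ∘ₗ a ∘ₗ U := by
    have := sub_eq_zero.mp hB0
    exact this
  -- a ∘ P = P ∘ a ∘ P
  have haP : a ∘ₗ P = P ∘ₗ a ∘ₗ P := by
    calc a ∘ₗ P = (a ∘ₗ U) ∘ₗ LinearMap.adjoint U := by
          rw [hPdef]; simp only [LinearMap.comp_assoc]
      _ = (P ∘ₗ a ∘ₗ U) ∘ₗ LinearMap.adjoint U := by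
          rw [haU, ← LinearMap.comp_assoc (a ∘ₗ U) P P, hP2]
      _ = P ∘ₗ a ∘ₗ P := by rw [hPdef]; simp only [LinearMap.comp_assoc]
  -- P ∘ a = P ∘ a ∘ P via adjoints
  have hPa : P ∘ₗ a = P ∘ₗ a ∘ₗ P := by
    have := congrArg LinearMap.adjoint haP
    simp only [LinearMap.adjoint_comp, ha, hPadj] at this
    rw [this, LinearMap.comp_assoc]
  have hcomm : P ∘ₗ a = a ∘ₗ P := by rw [haP]; exact hPa
  refine ⟨hcomm, ?_⟩
  have : (LinearMap.id - P) ∘ₗ a ∘ₗ (LinearMap.id - P)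
      = a - a ∘ₗ P - P ∘ₗ a + P ∘ₗ a ∘ₗ P := by
    simp only [LinearMap.comp_sub, LinearMap.sub_comp, LinearMap.id_comp,
      LinearMap.comp_id, LinearMap.comp_assoc]
    abel
  rw [this, ← hPa, hcomm]
  abel
end
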